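/- arXiv:math/0003065 — 6 statements merged into one kernel-verified Lean document; each statement's English description precedes it below -/
import Mathlib

section
/- In the category of types, reflexive coequalizers commute with binary products: given reflexive pairs f, g : X ⇉ Y (with common section s : Y → X satisfying f ∘ s = id and g ∘ s = id) and f', g' : X' ⇉ Y', the canonical map from the coequalizer of the pair (f × f', g × g') : X × X' ⇉ Y × Y' to the product (coeq(f,g)) × (coeq(f',g')) of the coequalizers is a bijection. -/
open CategoryTheory CategoryTheory.Limits

universe u

/-- In the category of types, reflexive coequalizers commute with binary products:
given reflexive pairs `f, g : X ⇉ Y` (with common section `s`) and `f', g' : X' ⇉ Y'`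
(with common section `s'`), the canonical map from the coequalizer of the pair
`(f × f', g × g') : X × X' ⇉ Y × Y'` to the product of the coequalizers is a bijection. -/
theorem reflexive_coequalizers_commute_with_binary_products
    {X Y X' Y' : Type u} (f g : X ⟶ Y) (s : Y ⟶ X)
    (hfs : s ≫ f = 𝟙 Y) (hgs : s ≫ g = 𝟙 Y)
    (f' g' : X' ⟶ Y') (s' : Y' ⟶ X')
    (hfs' : s' ≫ f' = 𝟙 Y') (hgs' : s' ≫ g' = 𝟙 Y')
    (q : (Y × Y' : Type u) ⟶ (coequalizer f g × coequalizer f' g' : Type u))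
    (hq : q = fun p : Y × Y' => (coequalizer.π f g p.1, coequalizer.π f' g' p.2))
    (w : (TypeCat.ofHom (Prod.map f f') : X × X' ⟶ Y × Y') ≫ q = (TypeCat.ofHom (Prod.map g g') : X × X' ⟶ Y × Y') ≫ q) :
    Function.Bijective
      (α := coequalizer (TypeCat.ofHom (Prod.map f f') : X × X' ⟶ Y × Y') (TypeCat.ofHom (Prod.map g g')))
      (β := coequalizer f g × coequalizer f' g')
      (coequalizer.desc q w) := by
  have hq' : q = TypeCat.ofHom (fun p : Y × Y' => (coequalizer.π f g p.1, coequalizer.π f' g' p.2)) := by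
    apply ConcreteCategory.hom_ext; intro p; exact congrFun hq p
  subst hq'
  rw [Function.bijective_iff_has_inverse]
  have hF : HasCoequalizer (C := Type u) (TypeCat.ofHom (Prod.map f f') : X × X' ⟶ Y × Y') (TypeCat.ofHom (Prod.map g g') : X × X' ⟶ Y × Y') := inferInstance
  let F : (X × X' : Type u) ⟶ (Y × Y' : Type u) := TypeCat.ofHom (Prod.map f f')
  let G : (X × X' : Type u) ⟶ (Y × Y' : Type u) := TypeCat.ofHom (Prod.map g g')
  let P : (Y × Y' : Type u) ⟶ coequalizer F G := coequalizer.π F G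
  have hcond' : ∀ p : X × X', P (F p) = P (G p) := fun p => types_congr_hom (coequalizer.condition F G) p
  have hf : ∀ y : Y, f (s y) = y := fun y => by simpa using types_congr_hom hfs y
  have hg : ∀ y : Y, g (s y) = y := fun y => by simpa using types_congr_hom hgs y
  have hf' : ∀ y' : Y', f' (s' y') = y' := fun y' => by simpa using types_congr_hom hfs' y'
  have hg' : ∀ y' : Y', g' (s' y') = y' := fun y' => by simpa using types_congr_hom hgs' y'
  have h1 : ∀ (y : Y) (x' : X'), P (y, f' x') = P (y, g' x') := by
    intro y x'
    have := hcond' (s y, x')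
    simpa [F, G, Prod.map, hf, hg] using this
  let k : Y → (coequalizer f' g' ⟶ coequalizer F G) :=
    fun y => coequalizer.desc (TypeCat.ofHom fun y' => P (y, y')) (by ext x'; exact h1 y x')
  have hk : ∀ (y : Y) (y' : Y'), k y (coequalizer.π f' g' y') = P (y, y') := by
    intro y y'
    exact types_congr_hom (coequalizer.π_desc (f := f') (g := g') (TypeCat.ofHom fun y' => P (y, y')) (by ext x'; exact h1 y x')) y'
  have h2 : ∀ x : X, k (f x) = k (g x) := by
    intro x
    apply coequalizer.hom_ext
    ext y'
    show k (f x) (coequalizer.π f' g' y') = k (g x) (coequalizer.π f' g' y')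
    rw [hk, hk]
    have := hcond' (x, s' y')
    simpa [F, G, Prod.map, hf', hg'] using this
  let K : coequalizer f g ⟶ (coequalizer f' g' → coequalizer F G) :=
    coequalizer.desc (TypeCat.ofHom fun y => (k y : coequalizer f' g' → coequalizer F G)) (by apply ConcreteCategory.hom_ext; intro x; exact congrArg (fun m : coequalizer f' g' ⟶ coequalizer F G => (m : coequalizer f' g' → coequalizer F G)) (h2 x))
  have hK : ∀ y : Y, K (coequalizer.π f g y) = k y := fun y =>
    types_congr_hom (coequalizer.π_desc (f := f) (g := g) (TypeCat.ofHom fun y => (k y : coequalizer f' g' → coequalizer F G)) (by apply ConcreteCategory.hom_ext; intro x; exact congrArg (fun m : coequalizer f' g' ⟶ coequalizer F G => (m : coequalizer f' g' → coequalizer F G)) (h2 x))) y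
  let D : coequalizer F G ⟶ (coequalizer f g × coequalizer f' g' : Type u) :=
    coequalizer.desc _ w
  have hdesc : ∀ y y', D (P (y, y')) = (coequalizer.π f g y, coequalizer.π f' g' y') := by
    intro y y'
    exact types_congr_hom
      (coequalizer.π_desc (f := F) (g := G) _ w)
      (y, y')
  refine ⟨fun p => K p.1 p.2, ?_, ?_⟩
  · intro c
    obtain ⟨⟨y, y'⟩, rfl⟩ := (epi_iff_surjective P).mp inferInstance c
    show K ((D (P (y, y'))).1) ((D (P (y, y'))).2) = P (y, y')
    rw [hdesc]
    show K (coequalizer.π f g y) (coequalizer.π f' g' y') = _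
    rw [hK, hk]
  · rintro ⟨a, b⟩
    obtain ⟨y, rfl⟩ := (epi_iff_surjective (coequalizer.π f g)).mp inferInstance a
    obtain ⟨y', rfl⟩ := (epi_iff_surjective (coequalizer.π f' g')).mp inferInstance b
    show D (K (coequalizer.π f g y) (coequalizer.π f' g' y')) = _
    rw [hK, hk, hdesc]
end

section
/- Let F : Type u ⥤ Type u be a functor that preserves filtered colimits. Then F is a pointwise left Kan extension of its restriction to finite types along the inclusion of finite types: the canonical comparison map from the left Kan extension of (FintypeCat.incl ⋙ F) along FintypeCat.incl to F is a natural isomorphism. -/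
open CategoryTheory CategoryTheory.Limits

universe u

noncomputable section

variable (X : Type u)

/-- The functor from finite subsets of `X` to the costructured arrow category. -/
def finsetToCostructured [DecidableEq X] :
    Finset X ⥤ CostructuredArrow FintypeCat.incl X where
  obj S := CostructuredArrow.mk
    (Y := FintypeCat.of {x // x ∈ S}) (TypeCat.ofHom (Subtype.val : {x // x ∈ S} → X))
  map {S T} h := CostructuredArrow.homMk
    (FintypeCat.homMk fun a => (⟨a.1, h.le a.2⟩ : {x // x ∈ T}) :
      FintypeCat.of {x // x ∈ S} ⟶ FintypeCat.of {x // x ∈ T}) rfl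

instance [DecidableEq X] : (finsetToCostructured X).Final := by
  apply Functor.final_of_exists_of_isFiltered
  · intro d
    letI : Fintype (FintypeCat.incl.obj d.left) := FintypeCat.fintype (X := d.left)
    letI : Fintype d.left.obj := FintypeCat.fintype (X := d.left)
    let S : Finset X := Finset.univ.image d.hom
    let u : d.left ⟶ FintypeCat.of {x // x ∈ S} :=
      FintypeCat.homMk fun a => ⟨d.hom a, Finset.mem_image_of_mem _ (Finset.mem_univ a)⟩
    exact ⟨S, ⟨CostructuredArrow.homMk u rfl⟩⟩
  · intro d S s s'
    refine ⟨S, 𝟙 S, ?_⟩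
    have h : s.left = s'.left := by
      ext a
      apply Subtype.ext
      have h1 := ConcreteCategory.congr_hom (CostructuredArrow.w s) a
      have h2 := ConcreteCategory.congr_hom (CostructuredArrow.w s') a
      exact h1.trans h2.symm
    apply CostructuredArrow.hom_ext
    simpa using h

/-- The tautological cocone. -/
def tautCocone : Cocone (CostructuredArrow.proj FintypeCat.incl X ⋙ FintypeCat.incl) where
  pt := X
  ι := { app := fun j => j.hom
         naturality := fun j j' φ => by exact (CostructuredArrow.w φ).trans (Category.comp_id _).symm }

def isColimitWhiskeredTaut [DecidableEq X] :
    IsColimit ((tautCocone X).whisker (finsetToCostructured X)) := by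
  apply Types.FilteredColimit.isColimitOf
  · intro x
    exact ⟨{x}, ⟨x, Finset.mem_singleton_self x⟩, rfl⟩
  · intro S T xi xj h
    refine ⟨S ∪ T, homOfLE le_sup_left, homOfLE le_sup_right, ?_⟩
    apply Subtype.ext
    exact h

end

/-- A filtered-colimit-preserving endofunctor `F` of `Type u` is a pointwise left Kan
extension of its restriction to finite types along the inclusion
`FintypeCat.incl : FintypeCat ⥤ Type u`; that is, the left extension of
`FintypeCat.incl ⋙ F` given by `F` itself (with the identity natural transformation
as unit) is a pointwise left Kan extension.  In particular the canonical comparison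
map from the left Kan extension of `FintypeCat.incl ⋙ F` along `FintypeCat.incl`
to `F` is a natural isomorphism. -/
theorem isPointwiseLeftKanExtension_of_preservesFilteredColimits
    (F : Type u ⥤ Type u) [PreservesFilteredColimits F] :
    Nonempty ((Functor.LeftExtension.mk F
      (𝟙 (FintypeCat.incl ⋙ F))).IsPointwiseLeftKanExtension) := by
  constructor
  intro X
  letI := Classical.decEq X
  have hcw := isColimitWhiskeredTaut X
  have hFcw : IsColimit (F.mapCocone ((tautCocone X).whisker (finsetToCostructured X))) :=
    isColimitOfPreserves F hcw
  have hFcw' : IsColimit ((F.mapCocone (tautCocone X)).whisker (finsetToCostructured X)) :=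
    IsColimit.ofIsoColimit hFcw (Cocones.ext (Iso.refl _) (by intro j; simp))
  have hFc : IsColimit (F.mapCocone (tautCocone X)) :=
    (Functor.Final.isColimitWhiskerEquiv (finsetToCostructured X) _) hFcw'
  exact IsColimit.ofIsoColimit hFc (Cocones.ext (Iso.refl _) (by intro j; simp [tautCocone]; exact (Category.comp_id _).trans (Category.id_comp _).symm))
end

section
/- Let F, G : Type u ⥤ Type u be functors that preserve filtered colimits. Then restriction along the inclusion of finite types is fully faithful on such functors: the map sending a natural transformation η : F ⟶ G to its whiskering FintypeCat.incl ◁ η : (FintypeCat.incl ⋙ F) ⟶ (FintypeCat.incl ⋙ G) is a bijection. -/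
open CategoryTheory CategoryTheory.Limits

universe u

namespace WhiskerLeftInclProof

/-- The diagram of finite subsets of `X`. -/
@[simps]
def fdiag (X : Type u) : Finset X ⥤ Type u where
  obj S := {x // x ∈ S}
  map {S T} h := TypeCat.ofHom fun x => ⟨x.1, h.le x.2⟩

/-- The canonical cocone on `fdiag X` with point `X`. -/
@[simps]
def cocone (X : Type u) : Cocone (fdiag X) where
  pt := X
  ι := { app := fun S => TypeCat.ofHom fun x => x.1, naturality := fun _ _ _ => rfl }

/-- `X` is the filtered colimit of its finite subsets. -/
instance (X : Type u) (S : Finset X) : Fintype ((fdiag X).obj S) :=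
  inferInstanceAs (Fintype {x // x ∈ S})

instance (X : Type u) : IsFiltered (Finset X) := by
  classical
  infer_instance

noncomputable def isColimit (X : Type u) : IsColimit (cocone X) := by
  classical
  exact Types.FilteredColimit.isColimitOf _ _
    (fun (x : X) => ⟨{x}, ⟨x, Finset.mem_singleton_self x⟩, rfl⟩)
    (fun S T a b h =>
      ⟨S ⊔ T, homOfLE le_sup_left, homOfLE le_sup_right, Subtype.ext (by exact h)⟩)

variable (F G : Type u ⥤ Type u) [PreservesFilteredColimits F] [PreservesFilteredColimits G]

noncomputable def isColimitF (X : Type u) : IsColimit (F.mapCocone (cocone X)) :=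
  isColimitOfPreserves F (isColimit X)

variable {F G}

/-- The target cocone used to define the extension of `ε`. -/
@[simps]
def coconeG (ε : FintypeCat.incl ⋙ F ⟶ FintypeCat.incl ⋙ G) (X : Type u) :
    Cocone (fdiag X ⋙ F) where
  pt := G.obj X
  ι :=
    { app := fun S =>
        (ε.app (FintypeCat.of ((fdiag X).obj S)) :
          F.obj ((fdiag X).obj S) ⟶ G.obj ((fdiag X).obj S)) ≫ G.map ((cocone X).ι.app S)
      naturality := fun S T h => by
        let gm : FintypeCat.of ((fdiag X).obj S) ⟶ FintypeCat.of ((fdiag X).obj T) :=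
          ObjectProperty.homMk ((fdiag X).map h)
        have hnat := ε.naturality gm
        ext y
        have h1 := ConcreteCategory.congr_hom hnat y
        dsimp at h1 ⊢
        rw [show ((fdiag X).map h) = gm.hom from rfl, h1]
        exact (FunctorToTypes.map_comp_apply G gm.hom ((cocone X).ι.app T) _).symm }

noncomputable def extApp (ε : FintypeCat.incl ⋙ F ⟶ FintypeCat.incl ⋙ G) (X : Type u) :
    F.obj X ⟶ G.obj X :=
  (isColimitF F X).desc (coconeG ε X)

lemma extApp_fac (ε : FintypeCat.incl ⋙ F ⟶ FintypeCat.incl ⋙ G) (X : Type u) (S : Finset X)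
    (y : F.obj ((fdiag X).obj S)) :
    extApp ε X (F.map ((cocone X).ι.app S) y) =
      G.map ((cocone X).ι.app S) (ε.app (FintypeCat.of ((fdiag X).obj S)) y) :=
  ConcreteCategory.congr_hom ((isColimitF F X).fac (coconeG ε X) S) y

/-- Extension of `ε` to a natural transformation `F ⟶ G`. -/
noncomputable def extend (ε : FintypeCat.incl ⋙ F ⟶ FintypeCat.incl ⋙ G) : F ⟶ G where
  app X := extApp ε X
  naturality := fun X Y f => by
    apply (isColimitF F X).hom_ext
    intro S
    ext z
    letI := Classical.decEq Y
    set T : Finset Y := S.image f with hT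
    let g : (fdiag X).obj S ⟶ (fdiag Y).obj T :=
      TypeCat.ofHom fun x => ⟨f x.1, Finset.mem_image_of_mem f x.2⟩
    have hg : ((cocone X).ι.app S ≫ f : (fdiag X).obj S ⟶ Y) = g ≫ (cocone Y).ι.app T := rfl
    let gm : FintypeCat.of ((fdiag X).obj S) ⟶ FintypeCat.of ((fdiag Y).obj T) := ObjectProperty.homMk g
    have hnat := ConcreteCategory.congr_hom (ε.naturality gm) (z : F.obj ((fdiag X).obj S))
    dsimp at hnat ⊢
    calc extApp ε Y (F.map f (F.map ((cocone X).ι.app S) z))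
        = extApp ε Y (F.map ((cocone Y).ι.app T) (F.map g z)) :=
          congrArg (fun t => extApp ε Y t) ((FunctorToTypes.map_comp_apply F ((cocone X).ι.app S) f z).symm.trans
            (FunctorToTypes.map_comp_apply F g ((cocone Y).ι.app T) z))
      _ = @id (G.obj Y) (G.map ((cocone Y).ι.app T) (ε.app (FintypeCat.of ((fdiag Y).obj T)) (F.map g z))) :=
          extApp_fac ε Y T _
      _ = @id (G.obj Y) (G.map ((cocone Y).ι.app T) (G.map g (ε.app (FintypeCat.of ((fdiag X).obj S)) z))) :=
          congrArg (G.map ((cocone Y).ι.app T)) hnat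
      _ = G.map f (G.map ((cocone X).ι.app S) (ε.app (FintypeCat.of ((fdiag X).obj S)) z)) :=
          (FunctorToTypes.map_comp_apply G g ((cocone Y).ι.app T) _).symm.trans
            (FunctorToTypes.map_comp_apply G ((cocone X).ι.app S) f _)
      _ = G.map f (extApp ε X (F.map ((cocone X).ι.app S) z)) :=
          congrArg (G.map f) (extApp_fac ε X S z).symm

end WhiskerLeftInclProof

open WhiskerLeftInclProof in
/-- For endofunctors `F G` of `Type u` preserving filtered colimits, restriction along the
inclusion of finite types is fully faithful: whiskering natural transformations with
`FintypeCat.incl` is a bijection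
`(F ⟶ G) ≃ (FintypeCat.incl ⋙ F ⟶ FintypeCat.incl ⋙ G)`. -/
theorem whiskerLeft_incl_bijective
    (F G : Type u ⥤ Type u) [PreservesFilteredColimits F] [PreservesFilteredColimits G] :
    Function.Bijective
      (fun η : F ⟶ G =>
        (Functor.whiskerLeft FintypeCat.incl η : FintypeCat.incl ⋙ F ⟶ FintypeCat.incl ⋙ G)) := by
  constructor
  · intro η η' h
    ext X x
    obtain ⟨S, y, rfl⟩ := Types.jointly_surjective_of_isColimit (isColimitF F X) x
    have h1 := ConcreteCategory.congr_hom (η.naturality ((cocone X).ι.app S)) y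
    have h2 := ConcreteCategory.congr_hom (η'.naturality ((cocone X).ι.app S)) y
    have h' : Functor.whiskerLeft FintypeCat.incl η = Functor.whiskerLeft FintypeCat.incl η' := h
    have h3 : (Functor.whiskerLeft FintypeCat.incl η).app (FintypeCat.of ((fdiag X).obj S)) y =
        (Functor.whiskerLeft FintypeCat.incl η').app (FintypeCat.of ((fdiag X).obj S)) y := by rw [h']
    dsimp at h1 h2 ⊢
    exact h1.trans ((congrArg (fun t => G.map ((cocone X).ι.app S) t) h3).trans h2.symm)
  · intro ε
    refine ⟨extend ε, ?_⟩
    ext A x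
    obtain ⟨S, y, rfl⟩ :=
      Types.jointly_surjective_of_isColimit (isColimitF F (FintypeCat.incl.obj A)) x
    have h1 := extApp_fac ε (FintypeCat.incl.obj A) S y
    let vm : FintypeCat.of ((fdiag (FintypeCat.incl.obj A)).obj S) ⟶ A :=
      ObjectProperty.homMk ((cocone (FintypeCat.incl.obj A)).ι.app S)
    have h2 := ConcreteCategory.congr_hom (ε.naturality vm) y
    exact h1.trans h2.symm
end

section
/- Let I be a set, let T be a monad on the category of I-graded sets whose underlying endofunctor preserves filtered colimits and reflexive coequalizers, and let X be a T-algebra. Then the composite functor from the under-category of objects under X in T-algebras to I-graded sets (first forgetting the map from X, then taking the underlying graded set) is a monadic right adjoint, and the underlying endofunctor of the associated monad (which sends a graded set K to the underlying graded set of the coproduct, in T-algebras, of the free T-algebra on K with X) preserves filtered colimits. -/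
open CategoryTheory CategoryTheory.Limits

universe u

noncomputable section UnderHelpers

namespace UnderMonadicHelper

variable {J : Type*} [Category J] {C : Type*} [Category C] {B : C}

theorem leg_constant [IsPreconnected J] {F : J ⥤ Under B}
    (c : Cocone (F ⋙ Under.forget B)) :
    ∀ j j' : J, (F.obj j).hom ≫ c.ι.app j = (F.obj j').hom ≫ c.ι.app j' :=
  constant_of_preserves_morphisms (fun j => (F.obj j).hom ≫ c.ι.app j)
    (fun j k f => by
      show (F.obj j).hom ≫ c.ι.app j = (F.obj k).hom ≫ c.ι.app k
      rw [← Under.w (F.map f)]; erw [Category.assoc]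
      congr 1
      exact (c.w f).symm)

/-- Raise a cocone on the underlying diagram to a cocone in the under category. -/
@[simps]
def raiseCocone [IsConnected J] {F : J ⥤ Under B} (c : Cocone (F ⋙ Under.forget B)) :
    Cocone F where
  pt := Under.mk ((F.obj (Classical.arbitrary J)).hom ≫ c.ι.app (Classical.arbitrary J))
  ι :=
    { app := fun j => Under.homMk (c.ι.app j) (leg_constant c j _)
      naturality := fun j k f => by
        ext
        exact (c.w f).trans (Category.comp_id _).symm }

/-- The raised cocone is a colimit. -/
def raisedCoconeIsColimit [IsConnected J] {F : J ⥤ Under B}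
    {c : Cocone (F ⋙ Under.forget B)} (t : IsColimit c) : IsColimit (raiseCocone c) where
  desc s := Under.homMk (t.desc ((Under.forget B).mapCocone s)) (by
    show ((F.obj _).hom ≫ c.ι.app _) ≫ t.desc ((Under.forget B).mapCocone s) = _
    erw [Category.assoc, t.fac ((Under.forget B).mapCocone s)]
    exact Under.w (s.ι.app _))
  fac s j := by
    ext
    exact t.fac ((Under.forget B).mapCocone s) j
  uniq s m K := by
    ext1
    apply t.hom_ext
    intro j
    dsimp
    erw [t.fac ((Under.forget B).mapCocone s) j]
    exact congrArg CommaMorphism.right (K j)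

/-- The forgetful functor from the under category creates connected colimits. -/
instance forgetCreatesConnectedColimits [IsConnected J] :
    CreatesColimitsOfShape J (Under.forget B) where
  CreatesColimit :=
    createsColimitOfReflectsIso fun c t =>
      { liftedCocone := raiseCocone c
        validLift := Cocones.ext (Iso.refl _) (by intro j; exact Category.comp_id _)
        makesColimit := raisedCoconeIsColimit t }

variable [HasBinaryCoproducts C] (B)

/-- The left adjoint of `Under.forget B` given by binary coproducts. -/
@[simps]
def coprodFunctor : C ⥤ Under B where
  obj A := Under.mk (coprod.inr : B ⟶ A ⨿ B)
  map {A A'} f := Under.homMk (coprod.map f (𝟙 B)) (by simp)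
  map_id A := by ext; simp
  map_comp f g := by ext; simp

/-- The adjunction `coprodFunctor B ⊣ Under.forget B`. -/
def coprodAdj : coprodFunctor B ⊣ Under.forget B :=
  Adjunction.mkOfHomEquiv
    { homEquiv := fun A U =>
        { toFun := fun g => coprod.inl ≫ g.right
          invFun := fun h => Under.homMk (coprod.desc h U.hom) (by exact coprod.inr_desc _ _)
          left_inv := fun g => by
            ext
            apply coprod.hom_ext
            · exact coprod.inl_desc _ _
            · exact (coprod.inr_desc _ _).trans (Under.w g).symm
          right_inv := fun h => by exact coprod.inl_desc _ _ }
      homEquiv_naturality_left_symm := fun f g => by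
        ext
        exact ((coprod.map_desc _ _ f (𝟙 B)).trans (by rw [Category.id_comp]; rfl)).symm
      homEquiv_naturality_right := fun f g => by exact (Category.assoc _ _ _).symm }

end UnderMonadicHelper

end UnderHelpers

/-- Let `T` be a monad on the category of `I`-graded sets whose underlying endofunctor
preserves filtered colimits and reflexive coequalizers, and let `X` be a `T`-algebra.
Then the composite functor `Under X ⥤ (Discrete I ⥤ Type u)` (forget the map from `X`,
then take the underlying graded set) is a monadic right adjoint, and for any adjunction
`L ⊣ (Under.forget X ⋙ Monad.forget T)` the underlying endofunctor of the induced monad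
preserves filtered colimits; its value at a graded set `K` is (isomorphic to) the
underlying graded set of the coproduct, in `T`-algebras, of the free `T`-algebra on `K`
with `X`.  (The binary-coproduct hypothesis holds automatically: the category of
`T`-algebras is cocomplete under the stated hypotheses on `T`.) -/
theorem under_category_monadic_over_graded_sets
    (I : Type u) (T : Monad (Discrete I ⥤ Type u))
    [PreservesFilteredColimits T.toFunctor]
    (hT : ∀ {X Y : Discrete I ⥤ Type u} (f g : X ⟶ Y) (s : Y ⟶ X),
      s ≫ f = 𝟙 Y → s ≫ g = 𝟙 Y → PreservesColimit (parallelPair f g) T.toFunctor)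
    [HasBinaryCoproducts (Monad.Algebra T)]
    (X : Monad.Algebra T) :
    Nonempty (MonadicRightAdjoint (Under.forget X ⋙ Monad.forget T)) ∧
    ∀ (L : (Discrete I ⥤ Type u) ⥤ Under X)
      (adj : L ⊣ Under.forget X ⋙ Monad.forget T),
      PreservesFilteredColimits (adj.toMonad).toFunctor ∧
      ∀ K : Discrete I ⥤ Type u,
        Nonempty ((adj.toMonad).toFunctor.obj K ≅
          (Monad.forget T).obj ((T.free.obj K) ⨿ X)) := by
  classical
  -- `T` preserves the colimit of any reflexive parallel-pair diagram.
  have key : ∀ (F : WalkingParallelPair ⥤ (Discrete I ⥤ Type u)),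
      IsReflexivePair (F.map .left) (F.map .right) → PreservesColimit F T.toFunctor := by
    intro F hF
    obtain ⟨s, h1, h2⟩ := hF.common_section'
    haveI := hT (F.map .left) (F.map .right) s h1 h2
    exact preservesColimit_of_iso_diagram T.toFunctor (diagramIsoParallelPair F).symm
  -- Reflexive parallel-pair diagrams in `Algebra T` have colimits created (hence preserved)
  -- by the forgetful functor.
  have algData : ∀ (D : WalkingParallelPair ⥤ Monad.Algebra T),
      IsReflexivePair (D.map .left) (D.map .right) →
      HasColimit D ∧ PreservesColimit D (Monad.forget T) := by
    intro D hD
    obtain ⟨s, h1, h2⟩ := hD.common_section'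
    haveI : PreservesColimit (D ⋙ Monad.forget T) T.toFunctor := by
      apply key
      refine IsReflexivePair.mk' ((Monad.forget T).map s) ?_ ?_
      · show (Monad.forget T).map s ≫ (Monad.forget T).map (D.map .left) = _
        rw [← Functor.map_comp, h1]; rfl
      · show (Monad.forget T).map s ≫ (Monad.forget T).map (D.map .right) = _
        rw [← Functor.map_comp, h2]; rfl
    haveI : PreservesColimit ((D ⋙ Monad.forget T) ⋙ T.toFunctor) T.toFunctor := by
      apply key
      refine IsReflexivePair.mk' (T.toFunctor.map ((Monad.forget T).map s)) ?_ ?_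
      · show T.toFunctor.map ((Monad.forget T).map s) ≫
          T.toFunctor.map ((Monad.forget T).map (D.map .left)) = _
        rw [← Functor.map_comp, ← Functor.map_comp, h1]
        simp
        exact T.map_id _
      · show T.toFunctor.map ((Monad.forget T).map s) ≫
          T.toFunctor.map ((Monad.forget T).map (D.map .right)) = _
        rw [← Functor.map_comp, ← Functor.map_comp, h2]
        simp
        exact T.map_id _
    haveI : CreatesColimit D (Monad.forget T) := Monad.forgetCreatesColimit D
    haveI : HasColimit D := hasColimit_of_created D (Monad.forget T)
    exact ⟨‹_›, inferInstance⟩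
  -- Reflexive parallel-pair diagrams in `Under X` have colimits and the composite
  -- forgetful functor preserves them.
  have underData : ∀ (D : WalkingParallelPair ⥤ Under X),
      IsReflexivePair (D.map .left) (D.map .right) →
      HasColimit D ∧ PreservesColimit D (Under.forget X ⋙ Monad.forget T) := by
    intro D hD
    obtain ⟨s, h1, h2⟩ := hD.common_section'
    have hD' : IsReflexivePair ((D ⋙ Under.forget X).map WalkingParallelPairHom.left)
        ((D ⋙ Under.forget X).map WalkingParallelPairHom.right) := by
      refine IsReflexivePair.mk' ((Under.forget X).map s) ?_ ?_
      · show (Under.forget X).map s ≫ (Under.forget X).map (D.map .left) = _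
        rw [← Functor.map_comp, h1]; rfl
      · show (Under.forget X).map s ≫ (Under.forget X).map (D.map .right) = _
        rw [← Functor.map_comp, h2]; rfl
    obtain ⟨q1, q2⟩ := algData (D ⋙ Under.forget X) hD'
    haveI := q1; haveI := q2
    haveI : CreatesColimit D (Under.forget X) :=
      UnderMonadicHelper.forgetCreatesConnectedColimits.CreatesColimit
    haveI : HasColimit D := hasColimit_of_created D (Under.forget X)
    exact ⟨‹_›, inferInstance⟩
  -- Instances needed for the reflexive monadicity theorem.
  haveI : HasReflexiveCoequalizers (Under X) := by
    constructor
    intro A B f g hfg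
    refine (underData (parallelPair f g) ?_).1
    obtain ⟨s, h1, h2⟩ := hfg.common_section'
    exact IsReflexivePair.mk' s h1 h2
  haveI : Monad.PreservesColimitOfIsReflexivePair (Under.forget X ⋙ Monad.forget T) := by
    constructor
    intro A B f g hfg
    refine (underData (parallelPair f g) ?_).2
    obtain ⟨s, h1, h2⟩ := hfg.common_section'
    exact IsReflexivePair.mk' s h1 h2
  -- A concrete adjunction for the composite forgetful functor.
  let adj₀ : T.free ⋙ UnderMonadicHelper.coprodFunctor X ⊣ Under.forget X ⋙ Monad.forget T :=
    T.adj.comp (UnderMonadicHelper.coprodAdj X)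
  constructor
  · exact ⟨Monad.monadicOfHasPreservesReflexiveCoequalizersOfReflectsIsomorphisms adj₀⟩
  · intro L adj
    constructor
    · show PreservesFilteredColimits (L ⋙ (Under.forget X ⋙ Monad.forget T))
      constructor
      intro J _ _
      haveI : IsConnected J := IsFiltered.isConnected J
      haveI : PreservesColimitsOfShape J T.toFunctor :=
        PreservesFilteredColimitsOfSize.preserves_filtered_colimits J
      haveI : CreatesColimitsOfShape J (Monad.forget T) :=
        Monad.forgetCreatesColimitsOfShape
      haveI : HasColimitsOfShape J (Monad.Algebra T) :=
        ⟨fun F => hasColimit_of_created F (Monad.forget T)⟩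
      haveI : PreservesColimitsOfShape J (Monad.forget T) := ⟨fun {K} => inferInstance⟩
      haveI : PreservesColimitsOfShape J (Under.forget X) := ⟨fun {K} => inferInstance⟩
      haveI := adj.leftAdjoint_preservesColimits
      infer_instance
    · intro K
      exact ⟨(Under.forget X ⋙ Monad.forget T).mapIso
        ((Adjunction.leftAdjointUniq adj adj₀).app K)⟩
end

section
/- Let M be a model category, let f : X ⟶ Y be a weak equivalence between cofibrant objects, and let i : X ⟶ X' be a cofibration. Then the pushout of f along i, namely the induced map X' ⟶ X' ⊔_X Y from X' to the pushout of i and f, is a weak equivalence. -/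
open CategoryTheory CategoryTheory.Limits

universe v u

structure ModelStructure (C : Type u) [Category.{v} C] where
  weq : MorphismProperty C
  fib : MorphismProperty C
  cof : MorphismProperty C
  weq_comp : ∀ {X Y Z : C} (f : X ⟶ Y) (g : Y ⟶ Z), weq f → weq g → weq (f ≫ g)
  weq_cancel_left : ∀ {X Y Z : C} (f : X ⟶ Y) (g : Y ⟶ Z), weq f → weq (f ≫ g) → weq g
  weq_cancel_right : ∀ {X Y Z : C} (f : X ⟶ Y) (g : Y ⟶ Z), weq g → weq (f ≫ g) → weq f
  weq_retract : ∀ {f g : Arrow C} (i : f ⟶ g) (r : g ⟶ f), i ≫ r = 𝟙 f →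
    weq g.hom → weq f.hom
  fib_retract : ∀ {f g : Arrow C} (i : f ⟶ g) (r : g ⟶ f), i ≫ r = 𝟙 f →
    fib g.hom → fib f.hom
  cof_retract : ∀ {f g : Arrow C} (i : f ⟶ g) (r : g ⟶ f), i ≫ r = 𝟙 f →
    cof g.hom → cof f.hom
  lift_of_trivCof : ∀ {A B X Y : C} (i : A ⟶ B) (p : X ⟶ Y),
    cof i → weq i → fib p → HasLiftingProperty i p
  lift_of_trivFib : ∀ {A B X Y : C} (i : A ⟶ B) (p : X ⟶ Y),
    cof i → fib p → weq p → HasLiftingProperty i p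
  factor_cof_trivFib : ∀ {X Y : C} (f : X ⟶ Y),
    ∃ (Z : C) (i : X ⟶ Z) (p : Z ⟶ Y), cof i ∧ fib p ∧ weq p ∧ i ≫ p = f
  factor_trivCof_fib : ∀ {X Y : C} (f : X ⟶ Y),
    ∃ (Z : C) (i : X ⟶ Z) (p : Z ⟶ Y), cof i ∧ weq i ∧ fib p ∧ i ≫ p = f

namespace ModelStructure

variable {C : Type u} [Category.{v} C] (M : ModelStructure C)

/-- Extract a lift from the (trivial cofibration, fibration) lifting axiom. -/
lemma exists_lift_tc {A B T S : C} {c : A ⟶ B} {p : T ⟶ S}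
    (hc : M.cof c) (hcw : M.weq c) (hp : M.fib p)
    {t : A ⟶ T} {b : B ⟶ S} (w : t ≫ p = c ≫ b) :
    ∃ l : B ⟶ T, c ≫ l = t ∧ l ≫ p = b := by
  have h := M.lift_of_trivCof c p hc hcw hp
  obtain ⟨⟨l, h₁, h₂⟩⟩ := (h.sq_hasLift (CommSq.mk w)).exists_lift
  exact ⟨l, h₁, h₂⟩

/-- Extract a lift from the (cofibration, trivial fibration) lifting axiom. -/
lemma exists_lift_tf {A B T S : C} {c : A ⟶ B} {p : T ⟶ S}
    (hc : M.cof c) (hp : M.fib p) (hpw : M.weq p)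
    {t : A ⟶ T} {b : B ⟶ S} (w : t ≫ p = c ≫ b) :
    ∃ l : B ⟶ T, c ≫ l = t ∧ l ≫ p = b := by
  have h := M.lift_of_trivFib c p hc hp hpw
  obtain ⟨⟨l, h₁, h₂⟩⟩ := (h.sq_hasLift (CommSq.mk w)).exists_lift
  exact ⟨l, h₁, h₂⟩

lemma weq_id (X : C) : M.weq (𝟙 X) := by
  obtain ⟨Z, i, p, hi, hp, hpw, fac⟩ := M.factor_cof_trivFib (𝟙 X)
  have h1 : M.weq ((p ≫ i) ≫ p) := by
    rw [Category.assoc, fac, Category.comp_id]; exact hpw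
  have h2 : M.weq (p ≫ i) := M.weq_cancel_right _ _ hpw h1
  have h3 : M.weq i := M.weq_cancel_left _ _ hpw h2
  rw [← fac]; exact M.weq_comp _ _ h3 hpw

/-- `f` is a retract of `g` in the arrow category, given explicit data. -/
lemma retract_of_data {A B A' B' : C} {f : A ⟶ B} {g : A' ⟶ B'}
    (u₁ : A ⟶ A') (u₂ : B ⟶ B') (v₁ : A' ⟶ A) (v₂ : B' ⟶ B)
    (sq₁ : u₁ ≫ g = f ≫ u₂) (sq₂ : v₁ ≫ f = g ≫ v₂)
    (h₁ : u₁ ≫ v₁ = 𝟙 A) (h₂ : u₂ ≫ v₂ = 𝟙 B) :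
    ∃ (ii : Arrow.mk f ⟶ Arrow.mk g) (rr : Arrow.mk g ⟶ Arrow.mk f),
      ii ≫ rr = 𝟙 (Arrow.mk f) := by
  refine ⟨Arrow.homMk' u₁ u₂ sq₁, Arrow.homMk' v₁ v₂ sq₂, ?_⟩
  apply CommaMorphism.ext
  · simpa using h₁
  · simpa using h₂

lemma weq_of_retract_data {A B A' B' : C} {f : A ⟶ B} {g : A' ⟶ B'}
    (u₁ : A ⟶ A') (u₂ : B ⟶ B') (v₁ : A' ⟶ A) (v₂ : B' ⟶ B)
    (sq₁ : u₁ ≫ g = f ≫ u₂) (sq₂ : v₁ ≫ f = g ≫ v₂)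
    (h₁ : u₁ ≫ v₁ = 𝟙 A) (h₂ : u₂ ≫ v₂ = 𝟙 B) (hg : M.weq g) : M.weq f := by
  obtain ⟨ii, rr, hir⟩ := retract_of_data u₁ u₂ v₁ v₂ sq₁ sq₂ h₁ h₂
  exact M.weq_retract ii rr hir hg

lemma cof_of_retract_data {A B A' B' : C} {f : A ⟶ B} {g : A' ⟶ B'}
    (u₁ : A ⟶ A') (u₂ : B ⟶ B') (v₁ : A' ⟶ A) (v₂ : B' ⟶ B)
    (sq₁ : u₁ ≫ g = f ≫ u₂) (sq₂ : v₁ ≫ f = g ≫ v₂)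
    (h₁ : u₁ ≫ v₁ = 𝟙 A) (h₂ : u₂ ≫ v₂ = 𝟙 B) (hg : M.cof g) : M.cof f := by
  obtain ⟨ii, rr, hir⟩ := retract_of_data u₁ u₂ v₁ v₂ sq₁ sq₂ h₁ h₂
  exact M.cof_retract ii rr hir hg

/-- Cofibrations are closed under composition. -/
lemma cof_comp {A B D : C} {f : A ⟶ B} {g : B ⟶ D} (hf : M.cof f) (hg : M.cof g) :
    M.cof (f ≫ g) := by
  obtain ⟨Z, c₂, p₂, hc₂, hp₂, hp₂w, fac⟩ := M.factor_cof_trivFib (f ≫ g)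
  -- lift the square (top c₂, bottom 𝟙) against p₂ in two stages
  obtain ⟨l₁, hl₁, hl₁'⟩ := M.exists_lift_tf hf hp₂ hp₂w
    (t := c₂) (b := g ≫ 𝟙 D) (by rw [fac]; simp)
  obtain ⟨l₂, hl₂, hl₂'⟩ := M.exists_lift_tf hg hp₂ hp₂w
    (t := l₁) (b := 𝟙 D) hl₁'
  refine M.cof_of_retract_data (𝟙 A) l₂ (𝟙 A) p₂ ?_ ?_ (by simp) (by rw [hl₂']) hc₂
  · rw [Category.id_comp, Category.assoc, hl₂, hl₁]
  · rw [Category.id_comp, fac]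

/-- The cobase change of a cofibration is a cofibration.
Here `c' ` is the cobase change of `c` along `a`. -/
lemma cof_cobase {A B A₂ B₂ : C} {a : A ⟶ A₂} {c : A ⟶ B} {c' : A₂ ⟶ B₂} {a' : B ⟶ B₂}
    (sq : IsPushout a c c' a') (hc : M.cof c) : M.cof c' := by
  obtain ⟨Z, c₂, p₂, hc₂, hp₂, hp₂w, fac⟩ := M.factor_cof_trivFib c'
  obtain ⟨l, hl, hl'⟩ := M.exists_lift_tf hc hp₂ hp₂w
    (t := a ≫ c₂) (b := a') (by rw [Category.assoc, fac, sq.w])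
  obtain ⟨lam, hlam₁, hlam₂⟩ :
      ∃ lam : B₂ ⟶ Z, c' ≫ lam = c₂ ∧ a' ≫ lam = l :=
    ⟨sq.desc c₂ l hl.symm, sq.inl_desc _ _ _, sq.inr_desc _ _ _⟩
  have hret : lam ≫ p₂ = 𝟙 B₂ := by
    apply sq.hom_ext
    · rw [← Category.assoc, hlam₁, fac, Category.comp_id]
    · rw [← Category.assoc, hlam₂, hl', Category.comp_id]
  exact M.cof_of_retract_data (𝟙 A₂) lam (𝟙 A₂) p₂
    (by rw [Category.id_comp, hlam₁]) (by rw [Category.id_comp, fac]) (by simp) hret hc₂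

/-- The cobase change of a trivial cofibration is a trivial cofibration. -/
lemma trivCof_cobase {A B A₂ B₂ : C} {a : A ⟶ A₂} {c : A ⟶ B} {c' : A₂ ⟶ B₂} {a' : B ⟶ B₂}
    (sq : IsPushout a c c' a') (hc : M.cof c) (hw : M.weq c) : M.cof c' ∧ M.weq c' := by
  obtain ⟨Z, c₂, p₂, hc₂, hc₂w, hp₂, fac⟩ := M.factor_trivCof_fib c'
  obtain ⟨l, hl, hl'⟩ := M.exists_lift_tc hc hw hp₂
    (t := a ≫ c₂) (b := a') (by rw [Category.assoc, fac, sq.w])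
  obtain ⟨lam, hlam₁, hlam₂⟩ :
      ∃ lam : B₂ ⟶ Z, c' ≫ lam = c₂ ∧ a' ≫ lam = l :=
    ⟨sq.desc c₂ l hl.symm, sq.inl_desc _ _ _, sq.inr_desc _ _ _⟩
  have hret : lam ≫ p₂ = 𝟙 B₂ := by
    apply sq.hom_ext
    · rw [← Category.assoc, hlam₁, fac, Category.comp_id]
    · rw [← Category.assoc, hlam₂, hl', Category.comp_id]
  constructor
  · exact M.cof_of_retract_data (𝟙 A₂) lam (𝟙 A₂) p₂
      (by rw [Category.id_comp, hlam₁]) (by rw [Category.id_comp, fac]) (by simp) hret hc₂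
  · exact M.weq_of_retract_data (𝟙 A₂) lam (𝟙 A₂) p₂
      (by rw [Category.id_comp, hlam₁]) (by rw [Category.id_comp, fac]) (by simp) hret hc₂w


end ModelStructure

/-- In a model category, the pushout of a weak equivalence between cofibrant objects
along a cofibration is a weak equivalence. -/
theorem pushout_of_weq_between_cofibrant_along_cofibration
    {C : Type u} [Category.{v} C] [HasLimits C] [HasColimits C]
    (M : ModelStructure C) {X Y X' P : C}
    (f : X ⟶ Y) (hf : M.weq f)
    (hX : M.cof (initial.to X)) (hY : M.cof (initial.to Y))
    (i : X ⟶ X') (hi : M.cof i)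
    (j : X' ⟶ P) (g : Y ⟶ P) (sq : IsPushout i f j g) :
    M.weq j := by
  ------------------------------------------------------------------
  -- STEP 1 : Brown factorization of f
  ------------------------------------------------------------------
  have sqXY := IsPushout.of_hasPushout (initial.to X) (initial.to Y)
  set XY := pushout (initial.to X) (initial.to Y) with hXYdef
  set inX : X ⟶ XY := pushout.inl _ _ with hinXdef
  set inY : Y ⟶ XY := pushout.inr _ _ with hinYdef
  have hinX_cof : M.cof inX := M.cof_cobase sqXY hY
  have hinY_cof : M.cof inY := M.cof_cobase sqXY.flip hX
  have hφw : initial.to X ≫ f = initial.to Y ≫ 𝟙 Y := initial.hom_ext _ _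
  set φ : XY ⟶ Y := sqXY.desc f (𝟙 Y) hφw with hφdef
  have hinXφ : inX ≫ φ = f := sqXY.inl_desc _ _ _
  have hinYφ : inY ≫ φ = 𝟙 Y := sqXY.inr_desc _ _ _
  obtain ⟨Z, cc, q, hcc_cof, hq_fib, hq_weq, hccq⟩ := M.factor_cof_trivFib φ
  set jZ : X ⟶ Z := inX ≫ cc with hjZdef
  set s : Y ⟶ Z := inY ≫ cc with hsdef
  have hjZq : jZ ≫ q = f := by rw [hjZdef, Category.assoc, hccq, hinXφ]
  have hsq : s ≫ q = 𝟙 Y := by rw [hsdef, Category.assoc, hccq, hinYφ]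
  have hjZ_cof : M.cof jZ := M.cof_comp hinX_cof hcc_cof
  have hjZ_weq : M.weq jZ := M.weq_cancel_right jZ q hq_weq (by rw [hjZq]; exact hf)
  have hs_cof : M.cof s := M.cof_comp hinY_cof hcc_cof
  have hs_weq : M.weq s := M.weq_cancel_right s q hq_weq (by rw [hsq]; exact M.weq_id Y)
  set e : Z ⟶ Z := q ≫ s with hedef
  have heq : e ≫ q = q := by rw [hedef, Category.assoc, hsq, Category.comp_id]
  ------------------------------------------------------------------
  -- STEP 2 : two-step pushout
  ------------------------------------------------------------------
  have sqW := IsPushout.of_hasPushout jZ i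
  set W := pushout jZ i with hWdef
  set k : Z ⟶ W := pushout.inl jZ i with hkdef
  set inrW : X' ⟶ W := pushout.inr jZ i with hinrWdef
  have hWcond : jZ ≫ k = i ≫ inrW := sqW.w
  have hk_cof : M.cof k := M.cof_cobase sqW hi
  obtain ⟨hinrW_cof, hinrW_weq⟩ := M.trivCof_cobase sqW.flip hjZ_cof hjZ_weq
  have hrw : jZ ≫ (q ≫ g) = i ≫ j := by
    rw [← Category.assoc, hjZq, ← sq.w]
  set r : W ⟶ P := sqW.desc (q ≫ g) j hrw with hrdef
  have hkr : k ≫ r = q ≫ g := sqW.inl_desc _ _ _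
  have hinrWr : inrW ≫ r = j := sqW.inr_desc _ _ _
  suffices hrweq : M.weq r by
    rw [← hinrWr]; exact M.weq_comp _ _ hinrW_weq hrweq
  have big : IsPushout f i g j := sq.flip
  ------------------------------------------------------------------
  -- STEP 3 : factor r as a trivial cofibration c' followed by a fibration p'
  ------------------------------------------------------------------
  obtain ⟨E, c', p', hc'_cof, hc'_weq, hp'_fib, hc'p'⟩ := M.factor_trivCof_fib r
  have hZcof : M.cof (initial.to Z) := by
    have h0 : initial.to Z = (initial.to X ≫ inX) ≫ cc := initial.hom_ext _ _
    rw [h0]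
    exact M.cof_comp (M.cof_comp hX hinX_cof) hcc_cof
  have hEcof : M.cof (initial.to E) := by
    have h0 : initial.to E = ((initial.to X ≫ i) ≫ inrW) ≫ c' := initial.hom_ext _ _
    rw [h0]
    exact M.cof_comp (M.cof_comp (M.cof_comp hX hi) hinrW_cof) hc'_cof
  ------------------------------------------------------------------
  -- STEP 4 : cylinder on Z and homotopy Hp : 1 ≃ e over q
  ------------------------------------------------------------------
  have sqPZ := IsPushout.of_hasPushout (initial.to Z) (initial.to Z)
  set PZ := pushout (initial.to Z) (initial.to Z) with hPZdef
  set ι₀ : Z ⟶ PZ := pushout.inl (initial.to Z) (initial.to Z) with hι₀def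
  set ι₁ : Z ⟶ PZ := pushout.inr (initial.to Z) (initial.to Z) with hι₁def
  have hι₀_cof : M.cof ι₀ := M.cof_cobase sqPZ hZcof
  have hι₁_cof : M.cof ι₁ := M.cof_cobase sqPZ.flip hZcof
  set foldZ : PZ ⟶ Z := sqPZ.desc (𝟙 Z) (𝟙 Z) (initial.hom_ext _ _) with hfoldZdef
  have hfold₀ : ι₀ ≫ foldZ = 𝟙 Z := sqPZ.inl_desc _ _ _
  have hfold₁ : ι₁ ≫ foldZ = 𝟙 Z := sqPZ.inr_desc _ _ _
  obtain ⟨CZ, cZ, wZ, hcZ_cof, hwZ_fib, hwZ_weq, hcZwZ⟩ := M.factor_cof_trivFib foldZ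
  set z₀ : Z ⟶ CZ := ι₀ ≫ cZ with hz₀def
  set z₁ : Z ⟶ CZ := ι₁ ≫ cZ with hz₁def
  have hz₀wZ : z₀ ≫ wZ = 𝟙 Z := by
    rw [hz₀def]; simp only [Category.assoc, hcZwZ, hfold₀]
  have hz₁wZ : z₁ ≫ wZ = 𝟙 Z := by
    rw [hz₁def]; simp only [Category.assoc, hcZwZ, hfold₁]
  have hz₀_cof : M.cof z₀ := M.cof_comp hι₀_cof hcZ_cof
  have hz₀_weq : M.weq z₀ :=
    M.weq_cancel_right z₀ wZ hwZ_weq (by rw [hz₀wZ]; exact M.weq_id Z)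
  have hz₁_weq : M.weq z₁ :=
    M.weq_cancel_right z₁ wZ hwZ_weq (by rw [hz₁wZ]; exact M.weq_id Z)
  set bde : PZ ⟶ Z := sqPZ.desc (𝟙 Z) e (initial.hom_ext _ _) with hbdedef
  have hbde₀ : ι₀ ≫ bde = 𝟙 Z := sqPZ.inl_desc _ _ _
  have hbde₁ : ι₁ ≫ bde = e := sqPZ.inr_desc _ _ _
  have hHpw : bde ≫ q = cZ ≫ (wZ ≫ q) := by
    rw [← Category.assoc, hcZwZ]
    apply sqPZ.hom_ext <;>
      simp only [Category.assoc, reassoc_of% hbde₀, reassoc_of% hbde₁,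
        reassoc_of% hfold₀, reassoc_of% hfold₁, heq, reassoc_of% heq,
        Category.id_comp]
  obtain ⟨Hp, hHp₁, hHp₂⟩ := M.exists_lift_tf hcZ_cof hq_fib hq_weq hHpw
  have hz₀Hp : z₀ ≫ Hp = 𝟙 Z := by
    rw [hz₀def]; simp only [Category.assoc, hHp₁, hbde₀]
  have hz₁Hp : z₁ ≫ Hp = e := by
    rw [hz₁def]; simp only [Category.assoc, hHp₁, hbde₁]
  ------------------------------------------------------------------
  -- STEP 5 : cylinder on W and the homotopy H : c' ≃ u' over P
  ------------------------------------------------------------------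
  have sqNW := IsPushout.of_hasPushout z₀ k
  set NW := pushout z₀ k with hNWdef
  set ιC : CZ ⟶ NW := pushout.inl z₀ k with hιCdef
  set ιW : W ⟶ NW := pushout.inr z₀ k with hιWdef
  obtain ⟨hιW_cof, hιW_weq⟩ := M.trivCof_cobase sqNW.flip hz₀_cof hz₀_weq
  set Θ : NW ⟶ W := sqNW.desc (wZ ≫ k) (𝟙 W)
    (by rw [← Category.assoc, hz₀wZ, Category.id_comp, Category.comp_id]) with hΘdef
  have hιCΘ : ιC ≫ Θ = wZ ≫ k := sqNW.inl_desc _ _ _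
  have hιWΘ : ιW ≫ Θ = 𝟙 W := sqNW.inr_desc _ _ _
  obtain ⟨CW, cW, wCW, hcW_cof, hwCW_fib, hwCW_weq, hcWwCW⟩ := M.factor_cof_trivFib Θ
  have hΘ_weq : M.weq Θ :=
    M.weq_cancel_left ιW Θ hιW_weq (by rw [hιWΘ]; exact M.weq_id W)
  have hcW_weq : M.weq cW :=
    M.weq_cancel_right cW wCW hwCW_weq (by rw [hcWwCW]; exact hΘ_weq)
  set w₀ : W ⟶ CW := ιW ≫ cW with hw₀def
  set ψ : CZ ⟶ CW := ιC ≫ cW with hψdef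
  have hw₀wCW : w₀ ≫ wCW = 𝟙 W := by
    rw [hw₀def]; simp only [Category.assoc, hcWwCW, hιWΘ]
  have hψwCW : ψ ≫ wCW = wZ ≫ k := by
    rw [hψdef]; simp only [Category.assoc, hcWwCW, hιCΘ]
  have hw₀_cof : M.cof w₀ := M.cof_comp hιW_cof hcW_cof
  have hw₀_weq : M.weq w₀ := M.weq_comp _ _ hιW_weq hcW_weq
  obtain ⟨w₁, hkw₁, hw₁wCW⟩ := M.exists_lift_tf hk_cof hwCW_fib hwCW_weq
    (t := z₁ ≫ ψ) (b := 𝟙 W)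
    (by simp only [Category.assoc, hψwCW, reassoc_of% hz₁wZ,
      Category.id_comp, Category.comp_id])
  have hw₁_weq : M.weq w₁ :=
    M.weq_cancel_right w₁ wCW hwCW_weq (by rw [hw₁wCW]; exact M.weq_id W)
  set K' : CZ ⟶ E := Hp ≫ k ≫ c' with hK'def
  have hz₀K' : z₀ ≫ K' = k ≫ c' := by
    rw [hK'def, ← Category.assoc, hz₀Hp, Category.id_comp]
  set topNW : NW ⟶ E := sqNW.desc K' c' hz₀K' with htopNWdef
  have hιCtop : ιC ≫ topNW = K' := sqNW.inl_desc _ _ _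
  have hιWtop : ιW ≫ topNW = c' := sqNW.inr_desc _ _ _
  have hHw : topNW ≫ p' = cW ≫ (wCW ≫ r) := by
    rw [← Category.assoc, hcWwCW]
    apply sqNW.hom_ext <;>
      simp only [Category.assoc, reassoc_of% hιCtop, reassoc_of% hιWtop,
        reassoc_of% hιCΘ, reassoc_of% hιWΘ, hK'def, hc'p', reassoc_of% hc'p',
        hkr, reassoc_of% hkr, reassoc_of% hHp₂, Category.id_comp]
  obtain ⟨H, hcWH, hHp'⟩ := M.exists_lift_tc hcW_cof hcW_weq hp'_fib hHw
  have hw₀H : w₀ ≫ H = c' := by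
    rw [hw₀def]; simp only [Category.assoc, hcWH, hιWtop]
  have hψH : ψ ≫ H = K' := by
    rw [hψdef]; simp only [Category.assoc, hcWH, hιCtop]
  set u' : W ⟶ E := w₁ ≫ H with hu'def
  have hku' : k ≫ u' = e ≫ k ≫ c' := by
    rw [hu'def, ← Category.assoc, hkw₁, Category.assoc, hψH, hK'def,
      ← Category.assoc, hz₁Hp]
  have hu'p' : u' ≫ p' = r := by
    rw [hu'def, Category.assoc, hHp', ← Category.assoc, hw₁wCW, Category.id_comp]
  have hH_weq : M.weq H := M.weq_cancel_left w₀ H hw₀_weq (by rw [hw₀H]; exact hc'_weq)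
  have hu'_weq : M.weq u' := M.weq_comp _ _ hw₁_weq hH_weq
  ------------------------------------------------------------------
  -- STEP 6 : the section ℓ of p'
  ------------------------------------------------------------------
  set lamY : Y ⟶ E := s ≫ k ≫ c' with hlamYdef
  have hku'' : k ≫ u' = q ≫ s ≫ k ≫ c' := by
    rw [hku', hedef, Category.assoc]
  have hbigw : f ≫ lamY = i ≫ (inrW ≫ u') := by
    rw [hlamYdef, ← hjZq]
    simp only [Category.assoc]
    have h1 : i ≫ inrW ≫ u' = jZ ≫ k ≫ u' := by
      rw [← Category.assoc, ← hWcond, Category.assoc]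
    rw [h1, hku'']
  set ℓ : P ⟶ E := big.desc lamY (inrW ≫ u') hbigw with hℓdef
  have hgℓ : g ≫ ℓ = lamY := big.inl_desc _ _ _
  have hjℓ : j ≫ ℓ = inrW ≫ u' := big.inr_desc _ _ _
  have hrℓ : r ≫ ℓ = u' := by
    apply sqW.hom_ext <;>
      simp only [Category.assoc, reassoc_of% hkr, reassoc_of% hinrWr,
        hgℓ, reassoc_of% hgℓ, hjℓ, hlamYdef, hku'']
  have hℓp' : ℓ ≫ p' = 𝟙 P := by
    apply big.hom_ext <;>
      simp only [Category.assoc, reassoc_of% hgℓ, reassoc_of% hjℓ, hlamYdef,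
        hc'p', reassoc_of% hc'p', hkr, reassoc_of% hkr, hsq, reassoc_of% hsq,
        hu'p', reassoc_of% hu'p', hinrWr, Category.comp_id, Category.id_comp]
  ------------------------------------------------------------------
  -- STEP 7 : glue the ends of the cylinder to E; fiberwise contraction G
  ------------------------------------------------------------------
  have sqNNa := IsPushout.of_hasPushout w₀ c'
  set NNa := pushout w₀ c' with hNNadef
  set ja : CW ⟶ NNa := pushout.inl w₀ c' with hjadef
  set ιE0 : E ⟶ NNa := pushout.inr w₀ c' with hιE0def
  obtain ⟨hja_cof, hja_weq⟩ := M.trivCof_cobase sqNNa hc'_cof hc'_weq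
  have sqNN2 := IsPushout.of_hasPushout (w₁ ≫ ja) c'
  set NN2 := pushout (w₁ ≫ ja) c' with hNN2def
  set jb : NNa ⟶ NN2 := pushout.inl (w₁ ≫ ja) c' with hjbdef
  set ιE1 : E ⟶ NN2 := pushout.inr (w₁ ≫ ja) c' with hιE1def
  obtain ⟨hjb_cof, hjb_weq⟩ := M.trivCof_cobase sqNN2 hc'_cof hc'_weq
  set Θa : NNa ⟶ E := sqNNa.desc (wCW ≫ c') (𝟙 E)
    (by rw [← Category.assoc, hw₀wCW, Category.id_comp, Category.comp_id]) with hΘadef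
  have hjaΘa : ja ≫ Θa = wCW ≫ c' := sqNNa.inl_desc _ _ _
  have hιE0Θa : ιE0 ≫ Θa = 𝟙 E := sqNNa.inr_desc _ _ _
  set ΘNN : NN2 ⟶ E := sqNN2.desc Θa (𝟙 E)
    (by rw [Category.assoc, hjaΘa, ← Category.assoc, hw₁wCW, Category.id_comp,
      Category.comp_id]) with hΘNNdef
  have hjbΘNN : jb ≫ ΘNN = Θa := sqNN2.inl_desc _ _ _
  have hιE1ΘNN : ιE1 ≫ ΘNN = 𝟙 E := sqNN2.inr_desc _ _ _
  have hΘNN_weq : M.weq ΘNN := by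
    refine M.weq_cancel_left (ja ≫ jb) ΘNN (M.weq_comp _ _ hja_weq hjb_weq) ?_
    rw [Category.assoc, hjbΘNN, hjaΘa]
    exact M.weq_comp _ _ hwCW_weq hc'_weq
  obtain ⟨CE2, cNN, wNN, hcNN_cof, hwNN_fib, hwNN_weq, hcNNwNN⟩ :=
    M.factor_cof_trivFib ΘNN
  have hcNN_weq : M.weq cNN :=
    M.weq_cancel_right cNN wNN hwNN_weq (by rw [hcNNwNN]; exact hΘNN_weq)
  set ε₀ : E ⟶ CE2 := ιE0 ≫ jb ≫ cNN with hε₀def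
  set ε₁ : E ⟶ CE2 := ιE1 ≫ cNN with hε₁def
  have hε₀wNN : ε₀ ≫ wNN = 𝟙 E := by
    rw [hε₀def]
    simp only [Category.assoc, hcNNwNN, hjbΘNN, reassoc_of% hjbΘNN, hιE0Θa,
      reassoc_of% hιE0Θa]
  have hε₁wNN : ε₁ ≫ wNN = 𝟙 E := by
    rw [hε₁def]; simp only [Category.assoc, hcNNwNN, hιE1ΘNN]
  set Ξa : NNa ⟶ E := sqNNa.desc H (𝟙 E) (by rw [hw₀H, Category.comp_id]) with hΞadef
  have hjaΞa : ja ≫ Ξa = H := sqNNa.inl_desc _ _ _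
  have hιE0Ξa : ιE0 ≫ Ξa = 𝟙 E := sqNNa.inr_desc _ _ _
  have hΞw : (w₁ ≫ ja) ≫ Ξa = c' ≫ (p' ≫ ℓ) := by
    rw [Category.assoc, hjaΞa, ← Category.assoc, hc'p', hrℓ, hu'def]
  set Ξ : NN2 ⟶ E := sqNN2.desc Ξa (p' ≫ ℓ) hΞw with hΞdef
  have hjbΞ : jb ≫ Ξ = Ξa := sqNN2.inl_desc _ _ _
  have hιE1Ξ : ιE1 ≫ Ξ = p' ≫ ℓ := sqNN2.inr_desc _ _ _
  have hΞaΘa : Ξa ≫ p' = Θa ≫ p' := by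
    apply sqNNa.hom_ext <;>
      simp only [Category.assoc, reassoc_of% hjaΞa, reassoc_of% hjaΘa,
        reassoc_of% hιE0Ξa, reassoc_of% hιE0Θa, hHp', hc'p',
        reassoc_of% hc'p', Category.id_comp]
  have hGw : Ξ ≫ p' = cNN ≫ (wNN ≫ p') := by
    rw [← Category.assoc, hcNNwNN]
    apply sqNN2.hom_ext <;>
      simp only [Category.assoc, reassoc_of% hjbΞ, reassoc_of% hjbΘNN,
        reassoc_of% hιE1Ξ, reassoc_of% hιE1ΘNN, hΞaΘa, hℓp',
        Category.comp_id, Category.id_comp]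
  obtain ⟨G, hcNNG, hGp'⟩ := M.exists_lift_tc hcNN_cof hcNN_weq hp'_fib hGw
  have hε₀G : ε₀ ≫ G = 𝟙 E := by
    rw [hε₀def]
    simp only [Category.assoc, hcNNG, hjbΞ, reassoc_of% hjbΞ, hιE0Ξa]
  have hε₁G : ε₁ ≫ G = p' ≫ ℓ := by
    rw [hε₁def]; simp only [Category.assoc, hcNNG, hιE1Ξ]
  ------------------------------------------------------------------
  -- STEP 8 : p' is a weak equivalence
  ------------------------------------------------------------------
  obtain ⟨E₀, c₀, p₀, hc₀_cof, hp₀_fib, hp₀_weq, hc₀p₀⟩ := M.factor_cof_trivFib p'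
  have sqPE := IsPushout.of_hasPushout (initial.to E) (initial.to E)
  set PE := pushout (initial.to E) (initial.to E) with hPEdef
  set κ₀ : E ⟶ PE := pushout.inl (initial.to E) (initial.to E) with hκ₀def
  set κ₁ : E ⟶ PE := pushout.inr (initial.to E) (initial.to E) with hκ₁def
  have hκ₀_cof : M.cof κ₀ := M.cof_cobase sqPE hEcof
  have hκ₁_cof : M.cof κ₁ := M.cof_cobase sqPE.flip hEcof
  set foldE : PE ⟶ E := sqPE.desc (𝟙 E) (𝟙 E) (initial.hom_ext _ _) with hfoldEdef
  have hfoldE₀ : κ₀ ≫ foldE = 𝟙 E := sqPE.inl_desc _ _ _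
  have hfoldE₁ : κ₁ ≫ foldE = 𝟙 E := sqPE.inr_desc _ _ _
  obtain ⟨CE', ccE, wE, hccE_cof, hwE_fib, hwE_weq, hccEwE⟩ := M.factor_cof_trivFib foldE
  set a₀ : E ⟶ CE' := κ₀ ≫ ccE with ha₀def
  set a₁ : E ⟶ CE' := κ₁ ≫ ccE with ha₁def
  have ha₀wE : a₀ ≫ wE = 𝟙 E := by
    rw [ha₀def]; simp only [Category.assoc, hccEwE, hfoldE₀]
  have ha₁wE : a₁ ≫ wE = 𝟙 E := by
    rw [ha₁def]; simp only [Category.assoc, hccEwE, hfoldE₁]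
  have ha₁_cof : M.cof a₁ := M.cof_comp hκ₁_cof hccE_cof
  have ha₁_weq : M.weq a₁ :=
    M.weq_cancel_right a₁ wE hwE_weq (by rw [ha₁wE]; exact M.weq_id E)
  set εpair : PE ⟶ CE2 := sqPE.desc ε₀ ε₁ (initial.hom_ext _ _) with hεpairdef
  have hεpair₀ : κ₀ ≫ εpair = ε₀ := sqPE.inl_desc _ _ _
  have hεpair₁ : κ₁ ≫ εpair = ε₁ := sqPE.inr_desc _ _ _
  have hεw : εpair ≫ wNN = ccE ≫ wE := by
    rw [hccEwE]
    apply sqPE.hom_ext <;>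
      simp only [Category.assoc, reassoc_of% hεpair₀, reassoc_of% hεpair₁,
        hε₀wNN, hε₁wNN, hfoldE₀, hfoldE₁]
  obtain ⟨φc, hccEφc, hφcwNN⟩ := M.exists_lift_tf hccE_cof hwNN_fib hwNN_weq hεw
  have ha₀φc : a₀ ≫ φc = ε₀ := by
    rw [ha₀def]; simp only [Category.assoc, hccEφc, hεpair₀]
  have ha₁φc : a₁ ≫ φc = ε₁ := by
    rw [ha₁def]; simp only [Category.assoc, hccEφc, hεpair₁]
  set hA : CE' ⟶ E := φc ≫ G with hhAdef
  have ha₀hA : a₀ ≫ hA = 𝟙 E := by rw [hhAdef, ← Category.assoc, ha₀φc, hε₀G]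
  have ha₁hA : a₁ ≫ hA = p' ≫ ℓ := by rw [hhAdef, ← Category.assoc, ha₁φc, hε₁G]
  have hhAp' : hA ≫ p' = wE ≫ p' := by
    rw [hhAdef, Category.assoc, hGp', ← Category.assoc, hφcwNN]
  set l₀ : E₀ ⟶ E := p₀ ≫ ℓ with hl₀def
  have sqMo := IsPushout.of_hasPushout a₁ c₀
  set Mo := pushout a₁ c₀ with hModef
  set cylE : CE' ⟶ Mo := pushout.inl a₁ c₀ with hcylEdef
  set m₁ : E₀ ⟶ Mo := pushout.inr a₁ c₀ with hm₁def
  obtain ⟨hm₁_cof, hm₁_weq⟩ := M.trivCof_cobase sqMo.flip ha₁_cof ha₁_weq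
  set ΘM : Mo ⟶ E₀ := sqMo.desc (wE ≫ c₀) (𝟙 E₀)
    (by rw [← Category.assoc, ha₁wE, Category.id_comp, Category.comp_id]) with hΘMdef
  have hcylEΘM : cylE ≫ ΘM = wE ≫ c₀ := sqMo.inl_desc _ _ _
  have hm₁ΘM : m₁ ≫ ΘM = 𝟙 E₀ := sqMo.inr_desc _ _ _
  have hΘM_weq : M.weq ΘM :=
    M.weq_cancel_left m₁ ΘM hm₁_weq (by rw [hm₁ΘM]; exact M.weq_id E₀)
  obtain ⟨CB, cM, wM, hcM_cof, hwM_fib, hwM_weq, hcMwM⟩ := M.factor_cof_trivFib ΘM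
  have hcM_weq : M.weq cM :=
    M.weq_cancel_right cM wM hwM_weq (by rw [hcMwM]; exact hΘM_weq)
  obtain ⟨σB, hc₀σB, hσBwM⟩ := M.exists_lift_tf hc₀_cof hwM_fib hwM_weq
    (t := a₀ ≫ cylE ≫ cM) (b := 𝟙 E₀)
    (by simp only [Category.assoc, hcMwM, hcylEΘM, reassoc_of% ha₀wE,
      Category.id_comp, Category.comp_id])
  set topMo : Mo ⟶ E := sqMo.desc hA l₀
    (by rw [ha₁hA, hl₀def, ← Category.assoc, hc₀p₀]) with htopModef
  have hcylEtop : cylE ≫ topMo = hA := sqMo.inl_desc _ _ _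
  have hm₁top : m₁ ≫ topMo = l₀ := sqMo.inr_desc _ _ _
  have hGhw : topMo ≫ p' = cM ≫ (wM ≫ p₀) := by
    rw [← Category.assoc, hcMwM]
    apply sqMo.hom_ext <;>
      simp only [Category.assoc, reassoc_of% hcylEtop, reassoc_of% hm₁top,
        reassoc_of% hcylEΘM, reassoc_of% hm₁ΘM, hhAp', hl₀def, hℓp',
        reassoc_of% hℓp', hc₀p₀, reassoc_of% hc₀p₀, Category.comp_id,
        Category.id_comp]
  obtain ⟨Gh, hcMGh, hGhp'⟩ := M.exists_lift_tc hcM_cof hcM_weq hp'_fib hGhw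
  set lam₀ : E₀ ⟶ E := σB ≫ Gh with hlam₀def
  have hc₀lam₀ : c₀ ≫ lam₀ = 𝟙 E := by
    rw [hlam₀def, ← Category.assoc, hc₀σB]
    simp only [Category.assoc, hcMGh, hcylEtop, ha₀hA]
  have hlam₀p' : lam₀ ≫ p' = p₀ := by
    rw [hlam₀def, Category.assoc, hGhp', ← Category.assoc, hσBwM, Category.id_comp]
  have hp'_weq : M.weq p' :=
    M.weq_of_retract_data c₀ (𝟙 P) lam₀ (𝟙 P)
      (by rw [hc₀p₀, Category.comp_id]) (by rw [hlam₀p', Category.comp_id])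
      hc₀lam₀ (by simp) hp₀_weq
  ------------------------------------------------------------------
  -- STEP 9 : conclude
  ------------------------------------------------------------------
  have hℓ_weq : M.weq ℓ :=
    M.weq_cancel_right ℓ p' hp'_weq (by rw [hℓp']; exact M.weq_id P)
  exact M.weq_cancel_right r ℓ hℓ_weq (by rw [hrℓ]; exact hu'_weq)
end

section
/- Let M be a model category in which every object is cofibrant. Then M is left proper: for every pushout square with sides i : A ⟶ B, f : A ⟶ C, g : B ⟶ D, (C ⟶ D), if i is a cofibration and f is a weak equivalence, then g is a weak equivalence. -/
open CategoryTheory CategoryTheory.Limits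

universe v u

namespace LeftProperAux

variable {C : Type u} [Category.{v} C]

/-- Retract transfer for weak equivalences, stated with explicit data. -/
theorem weq_of_retract (M : ModelStructure C) {X Y X' Y' : C} {f : X ⟶ Y} {g : X' ⟶ Y'}
    (a : X ⟶ X') (b : Y ⟶ Y') (a' : X' ⟶ X) (b' : Y' ⟶ Y)
    (w1 : a ≫ g = f ≫ b) (w2 : a' ≫ f = g ≫ b')
    (ha : a ≫ a' = 𝟙 X) (hb : b ≫ b' = 𝟙 Y) (hg : M.weq g) : M.weq f := by
  have := M.weq_retract (f := Arrow.mk f) (g := Arrow.mk g)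
    (Arrow.homMk (u := a) (v := b) w1) (Arrow.homMk (u := a') (v := b') w2)
    (by ext <;> simp [ha, hb]) hg
  simpa using this

theorem cof_of_retract (M : ModelStructure C) {X Y X' Y' : C} {f : X ⟶ Y} {g : X' ⟶ Y'}
    (a : X ⟶ X') (b : Y ⟶ Y') (a' : X' ⟶ X) (b' : Y' ⟶ Y)
    (w1 : a ≫ g = f ≫ b) (w2 : a' ≫ f = g ≫ b')
    (ha : a ≫ a' = 𝟙 X) (hb : b ≫ b' = 𝟙 Y) (hg : M.cof g) : M.cof f := by
  have := M.cof_retract (f := Arrow.mk f) (g := Arrow.mk g)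
    (Arrow.homMk (u := a) (v := b) w1) (Arrow.homMk (u := a') (v := b') w2)
    (by ext <;> simp [ha, hb]) hg
  simpa using this

theorem weq_id (M : ModelStructure C) (X : C) : M.weq (𝟙 X) := by
  obtain ⟨Z, q, p, _, hqw, _, fac⟩ := M.factor_trivCof_fib (𝟙 X)
  exact weq_of_retract M (𝟙 X) q (𝟙 X) p (by simp) (by simp [fac]) (by simp) fac hqw

/-- A map with the left lifting property against all fibrations is a trivial cofibration. -/
theorem trivCof_of_llp_fib (M : ModelStructure C) {A B : C} (j : A ⟶ B)
    (H : ∀ {X Y : C} (π : X ⟶ Y), M.fib π → HasLiftingProperty j π) :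
    M.cof j ∧ M.weq j := by
  obtain ⟨Z, q, p, hqc, hqw, hpf, fac⟩ := M.factor_trivCof_fib j
  haveI := H p hpf
  have sq : CommSq q j p (𝟙 B) := ⟨by simp [fac]⟩
  have h1 : (𝟙 A) ≫ q = j ≫ sq.lift := by simp [sq.fac_left]
  have h2 : (𝟙 A) ≫ j = q ≫ p := by simp [fac]
  have hb : sq.lift ≫ p = 𝟙 B := sq.fac_right
  exact ⟨cof_of_retract M (𝟙 A) sq.lift (𝟙 A) p h1 h2 (by simp) hb hqc,
    weq_of_retract M (𝟙 A) sq.lift (𝟙 A) p h1 h2 (by simp) hb hqw⟩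

theorem cof_of_llp_trivFib (M : ModelStructure C) {A B : C} (j : A ⟶ B)
    (H : ∀ {X Y : C} (π : X ⟶ Y), M.fib π → M.weq π → HasLiftingProperty j π) :
    M.cof j := by
  obtain ⟨Z, q, p, hqc, hpf, hpw, fac⟩ := M.factor_cof_trivFib j
  haveI := H p hpf hpw
  have sq : CommSq q j p (𝟙 B) := ⟨by simp [fac]⟩
  exact cof_of_retract M (𝟙 A) sq.lift (𝟙 A) p (by simp [sq.fac_left]) (by simp [fac])
    (by simp) sq.fac_right hqc

/-- Lifting properties transfer to cobase change. -/
theorem llp_pushout {Z W D E : C} {t : Z ⟶ W} {u : Z ⟶ D} {k : W ⟶ E} {h : D ⟶ E}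
    (sq : IsPushout t u k h) {X Y : C} (π : X ⟶ Y) [HasLiftingProperty u π] :
    HasLiftingProperty k π := by
  constructor
  intro top bot s
  have inner : CommSq (t ≫ top) u π (h ≫ bot) :=
    ⟨by rw [Category.assoc, s.w, ← Category.assoc, sq.w, Category.assoc]⟩
  refine CommSq.HasLift.mk' ⟨sq.desc top inner.lift inner.fac_left.symm, sq.inl_desc _ _ _, ?_⟩
  apply sq.hom_ext
  · rw [← Category.assoc, sq.inl_desc, s.w]
  · rw [← Category.assoc, sq.inr_desc, inner.fac_right]

theorem trivCof_pushout (M : ModelStructure C) {Z W D E : C} {t : Z ⟶ W} {u : Z ⟶ D}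
    {k : W ⟶ E} {h : D ⟶ E} (sq : IsPushout t u k h) (hc : M.cof u) (hw : M.weq u) :
    M.cof k ∧ M.weq k := by
  refine trivCof_of_llp_fib M k (fun π hπ => ?_)
  haveI := M.lift_of_trivCof u π hc hw hπ
  exact llp_pushout sq π

theorem cof_pushout (M : ModelStructure C) {Z W D E : C} {t : Z ⟶ W} {u : Z ⟶ D}
    {k : W ⟶ E} {h : D ⟶ E} (sq : IsPushout t u k h) (hc : M.cof u) : M.cof k := by
  refine cof_of_llp_trivFib M k (fun π hπ hπw => ?_)
  haveI := M.lift_of_trivFib u π hc hπ hπw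
  exact llp_pushout sq π

theorem cof_comp (M : ModelStructure C) {X Y Z : C} {f : X ⟶ Y} {g : Y ⟶ Z}
    (hf : M.cof f) (hg : M.cof g) : M.cof (f ≫ g) := by
  refine cof_of_llp_trivFib M _ (fun π hπ hπw => ?_)
  haveI := M.lift_of_trivFib f π hf hπ hπw
  haveI := M.lift_of_trivFib g π hg hπ hπw
  infer_instance

end LeftProperAux
namespace LeftProperAux

variable {C : Type u} [Category.{v} C]

section WithColimits
variable [HasLimits C] [HasColimits C]

theorem cof_inl (M : ModelStructure C) (hcof : ∀ X : C, M.cof (initial.to X)) (X Y : C) :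
    M.cof (coprod.inl : X ⟶ X ⨿ Y) := by
  refine cof_of_llp_trivFib M _ (fun π hπ hπw => ?_)
  constructor
  intro f g s
  haveI := M.lift_of_trivFib (initial.to Y) π (hcof Y) hπ hπw
  have s2 : CommSq (initial.to _) (initial.to Y) π (coprod.inr ≫ g) :=
    ⟨Subsingleton.elim _ _⟩
  refine CommSq.HasLift.mk' ⟨coprod.desc f s2.lift, by simp [coprod.inl_desc, coprod.inr_desc], ?_⟩
  apply coprod.hom_ext
  · simpa [coprod.inl_desc, coprod.inr_desc] using s.w
  · simpa [coprod.inl_desc, coprod.inr_desc] using s2.fac_right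

theorem cof_inr (M : ModelStructure C) (hcof : ∀ X : C, M.cof (initial.to X)) (X Y : C) :
    M.cof (coprod.inr : Y ⟶ X ⨿ Y) := by
  refine cof_of_llp_trivFib M _ (fun π hπ hπw => ?_)
  constructor
  intro f g s
  haveI := M.lift_of_trivFib (initial.to X) π (hcof X) hπ hπw
  have s2 : CommSq (initial.to _) (initial.to X) π (coprod.inl ≫ g) :=
    ⟨Subsingleton.elim _ _⟩
  refine CommSq.HasLift.mk' ⟨coprod.desc s2.lift f, by simp [coprod.inl_desc, coprod.inr_desc], ?_⟩
  apply coprod.hom_ext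
  · simpa [coprod.inl_desc, coprod.inr_desc] using s2.fac_right
  · simpa [coprod.inl_desc, coprod.inr_desc] using s.w

/-- Extension of a map along a trivial cofibration, into an object that is fibrant
(witnessed by a fibration to the terminal object). -/
theorem extend_along_trivCof (M : ModelStructure C) {A B Q : C} (j : A ⟶ B)
    (hc : M.cof j) (hw : M.weq j) {πQ : Q ⟶ ⊤_ C} (hf : M.fib πQ) (u : A ⟶ Q) :
    ∃ l : B ⟶ Q, j ≫ l = u := by
  haveI := M.lift_of_trivCof j πQ hc hw hf
  have s : CommSq u j πQ (terminal.from B) := ⟨Subsingleton.elim _ _⟩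
  exact ⟨s.lift, s.fac_left⟩

/-- A homotopy between two parallel maps, carried by a "generalized cylinder". -/
def Htp (M : ModelStructure C) {X Q : C} (x y : X ⟶ Q) : Prop :=
  ∃ (P : C) (δ₀ δ₁ : X ⟶ P) (σ : P ⟶ X) (K : P ⟶ Q),
    M.cof δ₀ ∧ M.weq δ₀ ∧ M.weq δ₁ ∧ δ₀ ≫ σ = 𝟙 X ∧ δ₁ ≫ σ = 𝟙 X ∧
    δ₀ ≫ K = x ∧ δ₁ ≫ K = y

/-- Homotopic maps are weak equivalences together. -/
theorem Htp.weq_right {M : ModelStructure C} {X Q : C} {x y : X ⟶ Q} (c : Htp M x y)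
    (hx : M.weq x) : M.weq y := by
  obtain ⟨P, δ₀, δ₁, σ, K, hc₀, hw₀, hw₁, hs₀, hs₁, he₀, he₁⟩ := c
  have hK : M.weq K := M.weq_cancel_left δ₀ K hw₀ (by rw [he₀]; exact hx)
  rw [← he₁]; exact M.weq_comp _ _ hw₁ hK

theorem Htp.symm {M : ModelStructure C} (hcof : ∀ X : C, M.cof (initial.to X))
    {X Q : C} {x y : X ⟶ Q} (c : Htp M x y) : Htp M y x := by
  obtain ⟨P, δ₀, δ₁, σ, K, hc₀, hw₀, hw₁, hs₀, hs₁, he₀, he₁⟩ := c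
  have hσw : M.weq σ := M.weq_cancel_left δ₀ σ hw₀ (by rw [hs₀]; exact weq_id M X)
  obtain ⟨P₂, c₈, σ₈, hc₈, hσ₈f, hσ₈w, fac⟩ :=
    M.factor_cof_trivFib (coprod.desc δ₀ δ₁)
  have hσ' : M.weq (σ₈ ≫ σ) := M.weq_comp _ _ hσ₈w hσw
  have s0 : (coprod.inl ≫ c₈) ≫ σ₈ ≫ σ = 𝟙 X := by
    rw [Category.assoc, ← Category.assoc c₈, fac]; simp [hs₀, coprod.inl_desc, coprod.inr_desc]
  have s1 : (coprod.inr ≫ c₈) ≫ σ₈ ≫ σ = 𝟙 X := by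
    rw [Category.assoc, ← Category.assoc c₈, fac]; simp [hs₁, coprod.inl_desc, coprod.inr_desc]
  refine ⟨P₂, coprod.inr ≫ c₈, coprod.inl ≫ c₈, σ₈ ≫ σ, σ₈ ≫ K,
    cof_comp M (cof_inr M hcof X X) hc₈, ?_, ?_, s1, s0, ?_, ?_⟩
  · exact M.weq_cancel_right _ _ hσ' (by rw [s1]; exact weq_id M X)
  · exact M.weq_cancel_right _ _ hσ' (by rw [s0]; exact weq_id M X)
  · rw [Category.assoc, ← Category.assoc c₈ σ₈ K, fac]; simp [he₁, coprod.inl_desc, coprod.inr_desc]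
  · rw [Category.assoc, ← Category.assoc c₈ σ₈ K, fac]; simp [he₀, coprod.inl_desc, coprod.inr_desc]

/-- Homotopies descend along trivial cofibrations. -/
theorem Htp.of_precomp {M : ModelStructure C} {X X' Q : C} (j : X ⟶ X')
    (hjc : M.cof j) (hjw : M.weq j) (u v : X' ⟶ Q) (c : Htp M (j ≫ u) (j ≫ v)) :
    Htp M u v := by
  obtain ⟨P, δ₀, δ₁, σ, K, hδ₀c, hδ₀w, hδ₁w, hs₀, hs₁, he₀, he₁⟩ := c
  have sqT := IsPushout.of_hasPushout j δ₀
  obtain ⟨hδ'c, hδ'w⟩ := trivCof_pushout M sqT hδ₀c hδ₀w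
  have sqN := IsPushout.of_hasPushout (δ₁ ≫ pushout.inr j δ₀) j
  obtain ⟨hj''c, hj''w⟩ := trivCof_pushout M sqN hjc hjw
  have hϑ : (δ₁ ≫ pushout.inr j δ₀) ≫ sqT.desc u K he₀.symm = j ≫ v := by
    rw [Category.assoc, sqT.inr_desc, he₁]
  have hσT : j ≫ (𝟙 X') = δ₀ ≫ (σ ≫ j) := by rw [← Category.assoc, hs₀]; simp
  have hσN : (δ₁ ≫ pushout.inr j δ₀) ≫ sqT.desc (𝟙 X') (σ ≫ j) hσT = j ≫ 𝟙 X' := by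
    rw [Category.assoc, sqT.inr_desc, ← Category.assoc, hs₁]; simp
  have split0 : (pushout.inl j δ₀ ≫ pushout.inl (δ₁ ≫ pushout.inr j δ₀) j) ≫
      sqN.desc (sqT.desc (𝟙 X') (σ ≫ j) hσT) (𝟙 X') hσN = 𝟙 X' := by
    rw [Category.assoc, sqN.inl_desc, sqT.inl_desc]
  have split1 : pushout.inr (δ₁ ≫ pushout.inr j δ₀) j ≫
      sqN.desc (sqT.desc (𝟙 X') (σ ≫ j) hσT) (𝟙 X') hσN = 𝟙 X' := sqN.inr_desc _ _ _
  have hσNw : M.weq (sqN.desc (sqT.desc (𝟙 X') (σ ≫ j) hσT) (𝟙 X') hσN) :=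
    M.weq_cancel_left _ _ (M.weq_comp _ _ hδ'w hj''w)
      (by rw [split0]; exact weq_id M X')
  refine ⟨_, pushout.inl j δ₀ ≫ pushout.inl (δ₁ ≫ pushout.inr j δ₀) j,
    pushout.inr (δ₁ ≫ pushout.inr j δ₀) j,
    sqN.desc (sqT.desc (𝟙 X') (σ ≫ j) hσT) (𝟙 X') hσN,
    sqN.desc (sqT.desc u K he₀.symm) v hϑ,
    cof_comp M hδ'c hj''c, M.weq_comp _ _ hδ'w hj''w,
    M.weq_cancel_right _ _ hσNw (by rw [split1]; exact weq_id M X'),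
    split0, split1, ?_, ?_⟩
  · rw [Category.assoc, sqN.inl_desc, sqT.inl_desc]
  · rw [sqN.inr_desc]

end WithColimits
end LeftProperAux
namespace LeftProperAux

variable {C : Type u} [Category.{v} C] [HasLimits C] [HasColimits C]

/-- Whitehead-type lemma: a map admitting a homotopy inverse (with fibrant target)
is a weak equivalence. -/
theorem weq_of_htpEquiv (M : ModelStructure C) (hcof : ∀ X : C, M.cof (initial.to X))
    {X Y : C} (f : X ⟶ Y) (g : Y ⟶ X) {πY : Y ⟶ ⊤_ C} (hπY : M.fib πY)
    (h1 : M.weq (f ≫ g)) (h2 : Htp M (g ≫ f) (𝟙 Y)) : M.weq f := by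
  obtain ⟨T, j, q, hjc, hjw, hqf, fac⟩ := M.factor_trivCof_fib f
  have hqg : M.weq (q ≫ g) :=
    M.weq_cancel_left j _ hjw (by rw [← Category.assoc, fac]; exact h1)
  obtain ⟨P, δ₀, δ₁, σ, K, hδ₀c, hδ₀w, hδ₁w, hs₀, hs₁, he₀, he₁⟩ := h2
  have hσw : M.weq σ := M.weq_cancel_left δ₀ σ hδ₀w (by rw [hs₀]; exact weq_id M Y)
  obtain ⟨P₂, c₇, σ₂, hc₇c, hσ₂f, hσ₂w, fac₂⟩ := M.factor_cof_trivFib σ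
  have hc₇w : M.weq c₇ := M.weq_cancel_right c₇ σ₂ hσ₂w (by rw [fac₂]; exact hσw)
  obtain ⟨K₂, hK₂⟩ := extend_along_trivCof M c₇ hc₇c hc₇w hπY K
  haveI := M.lift_of_trivCof (δ₀ ≫ c₇) q (cof_comp M hδ₀c hc₇c)
    (M.weq_comp _ _ hδ₀w hc₇w) hqf
  have sqh : CommSq (g ≫ j) (δ₀ ≫ c₇) q K₂ := by
    constructor
    rw [Category.assoc, fac, Category.assoc, hK₂, he₀]
  have hℓq : ((δ₁ ≫ c₇) ≫ sqh.lift) ≫ q = 𝟙 Y := by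
    rw [Category.assoc, sqh.fac_right, Category.assoc, hK₂, he₁]
  obtain ⟨CT, cT, σT, hcTc, hσTf, hσTw, facT⟩ :=
    M.factor_cof_trivFib (coprod.desc (𝟙 T) (𝟙 T))
  haveI := M.lift_of_trivFib cT σ₂ hcTc hσ₂f hσ₂w
  have sqF : CommSq (coprod.desc (q ≫ δ₀ ≫ c₇) (q ≫ δ₁ ≫ c₇)) cT σ₂ (σT ≫ q) := by
    constructor
    rw [← Category.assoc cT σT q, facT]
    apply coprod.hom_ext
    · rw [coprod.inl_desc_assoc, Category.assoc, Category.assoc, fac₂, hs₀]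
      simp [coprod.inl_desc, coprod.inr_desc]
    · rw [coprod.inr_desc_assoc, Category.assoc, Category.assoc, fac₂, hs₁]
      simp [coprod.inl_desc, coprod.inr_desc]
  have splitT0 : (coprod.inl ≫ cT) ≫ σT = 𝟙 T := by
    rw [Category.assoc, facT]; simp [coprod.inl_desc, coprod.inr_desc]
  have splitT1 : (coprod.inr ≫ cT) ≫ σT = 𝟙 T := by
    rw [Category.assoc, facT]; simp [coprod.inl_desc, coprod.inr_desc]
  have carrier : Htp M (q ≫ g ≫ j) (q ≫ ((δ₁ ≫ c₇) ≫ sqh.lift)) := by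
    refine ⟨CT, coprod.inl ≫ cT, coprod.inr ≫ cT, σT, sqF.lift ≫ sqh.lift,
      cof_comp M (cof_inl M hcof T T) hcTc,
      M.weq_cancel_right _ _ hσTw (by rw [splitT0]; exact weq_id M T),
      M.weq_cancel_right _ _ hσTw (by rw [splitT1]; exact weq_id M T),
      splitT0, splitT1, ?_, ?_⟩
    · rw [Category.assoc, ← Category.assoc cT, sqF.fac_left, coprod.inl_desc_assoc,
        Category.assoc, Category.assoc, ← Category.assoc δ₀, sqh.fac_left]
    · rw [Category.assoc, ← Category.assoc cT, sqF.fac_left, coprod.inr_desc_assoc,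
        Category.assoc, Category.assoc, ← Category.assoc δ₁]
  have hqgj : M.weq (q ≫ g ≫ j) := by
    rw [← Category.assoc]; exact M.weq_comp _ _ hqg hjw
  have hqℓ : M.weq (q ≫ ((δ₁ ≫ c₇) ≫ sqh.lift)) := carrier.weq_right hqgj
  have hq : M.weq q :=
    weq_of_retract M (𝟙 T) ((δ₁ ≫ c₇) ≫ sqh.lift) (𝟙 T) q
      (by simp) (by rw [Category.assoc, hℓq]; simp) (by simp) hℓq hqℓ
  rw [← fac]; exact M.weq_comp _ _ hjw hq

end LeftProperAux
open LeftProperAux in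
/-- A model category in which every object is cofibrant is left proper: in any pushout
square, the cobase change of a weak equivalence along a cofibration is a weak
equivalence. -/
theorem left_proper_of_all_objects_cofibrant
    {C : Type u} [Category.{v} C] [HasLimits C] [HasColimits C]
    (M : ModelStructure C)
    (hcof : ∀ X : C, M.cof (initial.to X))
    {A B D E : C} (i : A ⟶ B) (f : A ⟶ D) (g : B ⟶ E) (h : D ⟶ E)
    (sq : IsPushout i f g h) (hi : M.cof i) (hf : M.weq f) :
    M.weq g := by
  classical
  -- Factor f as a trivial cofibration followed by a (trivial) fibration.
  obtain ⟨Z, q₁, p, hq₁c, hq₁w, hpf, fac⟩ := M.factor_trivCof_fib f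
  have hpw : M.weq p := M.weq_cancel_left q₁ p hq₁w (by rw [fac]; exact hf)
  -- First pushout: along the trivial cofibration q₁.
  obtain ⟨W, jB, t, sq1⟩ : ∃ (W : C) (jB : B ⟶ W) (t : Z ⟶ W), IsPushout i q₁ jB t :=
    ⟨_, _, _, IsPushout.of_hasPushout i q₁⟩
  obtain ⟨hjBc, hjBw⟩ := trivCof_pushout M sq1 hq₁c hq₁w
  have htc : M.cof t := cof_pushout M sq1.flip hi
  -- Second pushout square: along the trivial fibration p.
  have wk : i ≫ g = q₁ ≫ (p ≫ h) := by rw [← Category.assoc, fac, sq.w]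
  obtain ⟨k, hjBk, htk, sq2⟩ : ∃ k : W ⟶ E, jB ≫ k = g ∧ t ≫ k = p ≫ h ∧
      IsPushout t p k h := by
    refine ⟨sq1.desc g (p ≫ h) wk, sq1.inl_desc _ _ _, sq1.inr_desc _ _ _, ?_⟩
    exact IsPushout.of_top (by rw [fac, sq1.inl_desc]; exact sq)
      (sq1.inr_desc _ _ _) sq1
  -- It suffices to prove that k is a weak equivalence.
  suffices hk : M.weq k by
    rw [← hjBk]; exact M.weq_comp _ _ hjBw hk
  -- A section of the trivial fibration p.
  haveI := M.lift_of_trivFib (initial.to D) p (hcof D) hpf hpw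
  have sqs : CommSq (initial.to Z) (initial.to D) p (𝟙 D) := ⟨Subsingleton.elim _ _⟩
  obtain ⟨s, hsp⟩ : ∃ s : D ⟶ Z, s ≫ p = 𝟙 D := ⟨sqs.lift, sqs.fac_right⟩
  -- A cylinder object for Z.
  obtain ⟨Cy, c, σc, hcc, hσcf, hσcw, facc⟩ :=
    M.factor_cof_trivFib (coprod.desc (𝟙 Z) (𝟙 Z))
  have hi₀σ : (coprod.inl ≫ c) ≫ σc = 𝟙 Z := by rw [Category.assoc, facc]; simp [coprod.inl_desc, coprod.inr_desc]
  have hi₁σ : (coprod.inr ≫ c) ≫ σc = 𝟙 Z := by rw [Category.assoc, facc]; simp [coprod.inl_desc, coprod.inr_desc]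
  have hi₀c : M.cof (coprod.inl ≫ c) := cof_comp M (cof_inl M hcof Z Z) hcc
  have hi₀w : M.weq (coprod.inl ≫ c) :=
    M.weq_cancel_right _ _ hσcw (by rw [hi₀σ]; exact weq_id M Z)
  -- The homotopy H' from the identity of Z to p ≫ s, fibrewise over D.
  haveI := M.lift_of_trivFib c p hcc hpf hpw
  have sqH : CommSq (coprod.desc (𝟙 Z) (p ≫ s)) c p (σc ≫ p) := by
    constructor
    rw [← Category.assoc c σc p, facc]
    apply coprod.hom_ext <;> simp [reassoc_of% hsp, hsp]
  obtain ⟨H', hcH', hHp⟩ : ∃ H' : Cy ⟶ Z,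
      c ≫ H' = coprod.desc (𝟙 Z) (p ≫ s) ∧ H' ≫ p = σc ≫ p :=
    ⟨sqH.lift, sqH.fac_left, sqH.fac_right⟩
  have hi₀H : (coprod.inl ≫ c) ≫ H' = 𝟙 Z := by
    rw [Category.assoc, hcH']; simp [coprod.inl_desc, coprod.inr_desc]
  have hi₁H : (coprod.inr ≫ c) ≫ H' = p ≫ s := by
    rw [Category.assoc, hcH']; simp [coprod.inl_desc, coprod.inr_desc]
  -- M₀ := W ⊔_Z Cy, glueing the 0-end of the cylinder along t.
  obtain ⟨M₀, w₁, w₂, sqM⟩ : ∃ (M₀ : C) (w₁ : W ⟶ M₀) (w₂ : Cy ⟶ M₀),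
      IsPushout t (coprod.inl ≫ c) w₁ w₂ :=
    ⟨_, _, _, IsPushout.of_hasPushout t (coprod.inl ≫ c)⟩
  obtain ⟨hw₁c, hw₁w⟩ := trivCof_pushout M sqM hi₀c hi₀w
  -- The relative cylinder CW on W.
  have wν : t ≫ 𝟙 W = (coprod.inl ≫ c) ≫ (σc ≫ t) := by
    rw [Category.comp_id, ← Category.assoc, hi₀σ, Category.id_comp]
  obtain ⟨CW, μ, σ', hμc, hσ'f, hσ'w, facν⟩ :=
    M.factor_cof_trivFib (sqM.desc (𝟙 W) (σc ≫ t) wν)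
  have e1 : w₁ ≫ sqM.desc (𝟙 W) (σc ≫ t) wν = 𝟙 W := sqM.inl_desc _ _ _
  have e2 : w₂ ≫ sqM.desc (𝟙 W) (σc ≫ t) wν = σc ≫ t := sqM.inr_desc _ _ _
  have hδ₀σ : w₁ ≫ μ ≫ σ' = 𝟙 W := by rw [← Category.assoc, Category.assoc, facν, e1]
  have hlamσ : w₂ ≫ μ ≫ σ' = σc ≫ t := by rw [← Category.assoc, Category.assoc, facν, e2]
  have hμw : M.weq μ :=
    M.weq_cancel_left w₁ μ hw₁w
      (M.weq_cancel_right _ _ hσ'w (by rw [Category.assoc, hδ₀σ]; exact weq_id M W))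
  have hδ₀c : M.cof (w₁ ≫ μ) := cof_comp M hw₁c hμc
  have hδ₀w : M.weq (w₁ ≫ μ) := M.weq_comp _ _ hw₁w hμw
  -- The 1-end of the relative cylinder.
  haveI := M.lift_of_trivFib t σ' htc hσ'f hσ'w
  have sqδ : CommSq ((coprod.inr ≫ c) ≫ (w₂ ≫ μ)) t σ' (𝟙 W) := by
    constructor
    simp only [Category.comp_id, Category.assoc]
    rw [hlamσ]
    simp only [reassoc_of% hi₁σ]
  obtain ⟨δ₁, htδ₁', hδ₁σ⟩ : ∃ δ₁ : W ⟶ CW,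
      t ≫ δ₁ = (coprod.inr ≫ c) ≫ (w₂ ≫ μ) ∧ δ₁ ≫ σ' = 𝟙 W :=
    ⟨sqδ.lift, sqδ.fac_left, sqδ.fac_right⟩
  have htδ₁ : t ≫ δ₁ = coprod.inr ≫ c ≫ w₂ ≫ μ := by
    rw [htδ₁']; simp only [Category.assoc]
  have hδ₁w : M.weq δ₁ :=
    M.weq_cancel_right _ _ hσ'w (by rw [hδ₁σ]; exact weq_id M W)
  -- Fibrant replacement of W.
  obtain ⟨Wf, ρW, πW, hρWc, hρWw, hπWf, -⟩ := M.factor_trivCof_fib (terminal.from W)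
  -- Extend the homotopy over the relative cylinder, into Wf.
  have wm₀ : t ≫ ρW = (coprod.inl ≫ c) ≫ (H' ≫ t ≫ ρW) := by
    rw [← Category.assoc, hi₀H, Category.id_comp]
  obtain ⟨Gh, hGh⟩ := extend_along_trivCof M μ hμc hμw hπWf
    (sqM.desc ρW (H' ≫ t ≫ ρW) wm₀)
  have hδ₀Gh : w₁ ≫ μ ≫ Gh = ρW := by rw [hGh, sqM.inl_desc]
  have hlamGh : w₂ ≫ μ ≫ Gh = H' ≫ t ≫ ρW := by rw [hGh, sqM.inr_desc]
  have hGhw : M.weq Gh :=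
    M.weq_cancel_left (w₁ ≫ μ) Gh hδ₀w (by rw [Category.assoc, hδ₀Gh]; exact hρWw)
  -- The strictified map a : W ⟶ Wf.
  have hta : t ≫ (δ₁ ≫ Gh) = p ≫ (s ≫ t ≫ ρW) := by
    rw [← Category.assoc, htδ₁]
    simp only [Category.assoc]
    rw [hlamGh]
    simp only [reassoc_of% hi₁H]
  have haw : M.weq (δ₁ ≫ Gh) := M.weq_comp _ _ hδ₁w hGhw
  -- gbar : E ⟶ Wf.
  set gbar : E ⟶ Wf := sq2.desc (δ₁ ≫ Gh) (s ≫ t ≫ ρW) hta with hgbar_def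
  have hkgbar : k ≫ gbar = δ₁ ≫ Gh := sq2.inl_desc _ _ _
  have hhgbar : h ≫ gbar = s ≫ t ≫ ρW := sq2.inr_desc _ _ _
  -- Fibrant replacement of E, and the comparison maps.
  obtain ⟨Ef, ρ, πE, hρc, hρw, hπEf, -⟩ := M.factor_trivCof_fib (terminal.from E)
  obtain ⟨kh, hkh⟩ := extend_along_trivCof M ρW hρWc hρWw hπEf (k ≫ ρ)
  obtain ⟨gh, hgh⟩ := extend_along_trivCof M ρ hρc hρw hπWf gbar
  -- The glued homotopy carrier N.
  have wex : t ≫ k = (coprod.inl ≫ c) ≫ (σc ≫ p ≫ h) := by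
    rw [← Category.assoc, hi₀σ, Category.id_comp, htk]
  set ex : M₀ ⟶ E := sqM.desc k (σc ≫ p ≫ h) wex with hex_def
  have hw₁ex : w₁ ≫ ex = k := sqM.inl_desc _ _ _
  have hw₂ex : w₂ ≫ ex = σc ≫ p ≫ h := sqM.inr_desc _ _ _
  obtain ⟨N, ε₀, νN, sqN⟩ : ∃ (N : C) (ε₀ : E ⟶ N) (νN : CW ⟶ N),
      IsPushout ex μ ε₀ νN := ⟨_, _, _, IsPushout.of_hasPushout ex μ⟩
  obtain ⟨hε₀c, hε₀w⟩ := trivCof_pushout M sqN hμc hμw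
  have wK₇ : ex ≫ ρ = μ ≫ (Gh ≫ kh) := by
    apply sqM.hom_ext
    · simp only [reassoc_of% hw₁ex, reassoc_of% hδ₀Gh, hkh]
    · simp only [reassoc_of% hw₂ex, reassoc_of% hlamGh, hkh, reassoc_of% htk,
        reassoc_of% hHp]
  set K₇ : N ⟶ Ef := sqN.desc ρ (Gh ≫ kh) wK₇ with hK₇_def
  have hε₀K : ε₀ ≫ K₇ = ρ := sqN.inl_desc _ _ _
  have hνK : νN ≫ K₇ = Gh ≫ kh := sqN.inr_desc _ _ _
  -- The other end of the glued homotopy.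
  have hlamν : w₂ ≫ μ ≫ νN = σc ≫ p ≫ h ≫ ε₀ := by
    rw [← sqN.w]
    simp only [reassoc_of% hw₂ex]
  have wε₁ : t ≫ (δ₁ ≫ νN) = p ≫ (h ≫ ε₀) := by
    rw [← Category.assoc, htδ₁]
    simp only [Category.assoc]
    rw [hlamν]
    simp only [reassoc_of% hi₁σ]
  set ε₁ : E ⟶ N := sq2.desc (δ₁ ≫ νN) (h ≫ ε₀) wε₁ with hε₁_def
  have hkε₁ : k ≫ ε₁ = δ₁ ≫ νN := sq2.inl_desc _ _ _
  have hhε₁ : h ≫ ε₁ = h ≫ ε₀ := sq2.inr_desc _ _ _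
  -- The retraction of N to E.
  have wσ₇ : ex ≫ 𝟙 E = μ ≫ (σ' ≫ k) := by
    apply sqM.hom_ext
    · simp only [Category.comp_id, hw₁ex, reassoc_of% hδ₀σ]
    · simp only [Category.comp_id, hw₂ex, reassoc_of% hlamσ, htk]
  set σ₇ : N ⟶ E := sqN.desc (𝟙 E) (σ' ≫ k) wσ₇ with hσ₇_def
  have hε₀σ₇ : ε₀ ≫ σ₇ = 𝟙 E := sqN.inl_desc _ _ _
  have hνσ₇ : νN ≫ σ₇ = σ' ≫ k := sqN.inr_desc _ _ _
  have hε₁σ₇ : ε₁ ≫ σ₇ = 𝟙 E := by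
    apply sq2.hom_ext
    · simp only [Category.comp_id, reassoc_of% hkε₁, hνσ₇, reassoc_of% hδ₁σ]
    · simp only [Category.comp_id, reassoc_of% hhε₁, hε₀σ₇]
  have hσ₇w : M.weq σ₇ :=
    M.weq_cancel_left ε₀ σ₇ hε₀w (by rw [hε₀σ₇]; exact weq_id M E)
  have hε₁w : M.weq ε₁ :=
    M.weq_cancel_right ε₁ σ₇ hσ₇w (by rw [hε₁σ₇]; exact weq_id M E)
  have hε₁K : ε₁ ≫ K₇ = gbar ≫ kh := by
    apply sq2.hom_ext
    · simp only [reassoc_of% hkε₁, hνK, reassoc_of% hkgbar]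
    · simp only [reassoc_of% hhε₁, hε₀K, reassoc_of% hhgbar, hkh,
        reassoc_of% htk, reassoc_of% hsp]
  -- The homotopy between ρ and gbar ≫ kh, hence between 𝟙 and gh ≫ kh.
  have carrier7 : Htp M ρ (gbar ≫ kh) :=
    ⟨N, ε₀, ε₁, σ₇, K₇, hε₀c, hε₀w, hε₁w, hε₀σ₇, hε₁σ₇, hε₀K, hε₁K⟩
  have carrier7' : Htp M (ρ ≫ 𝟙 Ef) (ρ ≫ (gh ≫ kh)) := by
    rw [Category.comp_id, ← Category.assoc, hgh]; exact carrier7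
  have c3 : Htp M (gh ≫ kh) (𝟙 Ef) :=
    (Htp.of_precomp ρ hρc hρw _ _ carrier7').symm hcof
  -- kh ≫ gh is a weak equivalence.
  have h1 : M.weq (kh ≫ gh) := by
    refine M.weq_cancel_left ρW _ hρWw ?_
    rw [← Category.assoc, hkh, Category.assoc, hgh, hkgbar]
    exact haw
  -- Whitehead: kh is a weak equivalence.
  have hkhw : M.weq kh := weq_of_htpEquiv M hcof kh gh hπEf h1 c3
  have : M.weq (k ≫ ρ) := by rw [← hkh]; exact M.weq_comp _ _ hρWw hkhw
  exact M.weq_cancel_right k ρ hρw this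
end
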